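/- arXiv:2502.11391 — 2 statements merged into one kernel-verified Lean document; each statement's English description precedes it below -/
import Mathlib

section
/- Let M be a perfect matching of a connected graph G with af(G,M) = Af(G), and let e = uv be an edge of G not in M. Let G_e be the graph obtained from G by deleting the edge e, adding four new vertices w₁, w₂, w₃, w₄, and adding the edges uw₁, w₁w₂, w₂w₃, w₃w₄, w₄v and w₁w₄. Then gf(G_e) = gf(G) + 1 and Af(G_e) = Af(G) + 1. -/
/-- `M` is a perfect matching of `G`, regarded as a set of edges: every edge of `M` is an
edge of `G` and every vertex lies in exactly one edge of `M`. -/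
def IsPM {V : Type*} (G : SimpleGraph V) (M : Set (Sym2 V)) : Prop :=
  M ⊆ G.edgeSet ∧ ∀ w : V, ∃! e, e ∈ M ∧ w ∈ e

/-- A graph is matchable if it has a perfect matching. -/
def Matchable {V : Type*} (G : SimpleGraph V) : Prop :=
  ∃ M, IsPM G M

/-- A global forcing set of `G`: a set `S` of edges of `G` distinguishing all
perfect matchings of `G`. -/
def IsGlobalForcingSet {V : Type*} (G : SimpleGraph V) (S : Set (Sym2 V)) : Prop :=
  S ⊆ G.edgeSet ∧
    ∀ M₁ M₂, IsPM G M₁ → IsPM G M₂ → M₁ ≠ M₂ → S ∩ M₁ ≠ S ∩ M₂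

/-- The global forcing number: the minimum cardinality of a global forcing set. -/
noncomputable def gf {V : Type*} (G : SimpleGraph V) : ℕ :=
  sInf {n | ∃ S, IsGlobalForcingSet G S ∧ S.ncard = n}

/-- An anti-forcing set of a perfect matching `M` of `G`: a set `S` of edges of `G`
disjoint from `M` such that `M` is the unique perfect matching of `G - S`. -/
def IsAntiForcingSet {V : Type*} (G : SimpleGraph V) (M S : Set (Sym2 V)) : Prop :=
  S ⊆ G.edgeSet ∧ S ∩ M = ∅ ∧ IsPM (G.deleteEdges S) M ∧
    ∀ M', IsPM (G.deleteEdges S) M' → M' = M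

/-- The anti-forcing number of a perfect matching `M` of `G`. -/
noncomputable def af {V : Type*} (G : SimpleGraph V) (M : Set (Sym2 V)) : ℕ :=
  sInf {n | ∃ S, IsAntiForcingSet G M S ∧ S.ncard = n}

/-- The maximum anti-forcing number of `G`. -/
noncomputable def Af {V : Type*} (G : SimpleGraph V) : ℕ :=
  sSup {n | ∃ M, IsPM G M ∧ af G M = n}

/-- The graph `G_e` obtained from `G` by deleting the edge `e = uv`, adding four new
vertices `w₁, w₂, w₃, w₄` and adding the edges `uw₁, w₁w₂, w₂w₃, w₃w₄, w₄v, w₁w₄`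
(the new vertices `w₁, w₂, w₃, w₄` are `Sum.inr 0, …, Sum.inr 3`). -/
def addSquare {V : Type*} (G : SimpleGraph V) (u v : V) : SimpleGraph (V ⊕ Fin 4) :=
  SimpleGraph.fromEdgeSet
    ((Sym2.map Sum.inl '' (G.edgeSet \ {s(u, v)})) ∪
      {s(Sum.inl u, Sum.inr 0), s(Sum.inr 0, Sum.inr 1), s(Sum.inr 1, Sum.inr 2),
       s(Sum.inr 2, Sum.inr 3), s(Sum.inr 3, Sum.inl v), s(Sum.inr 0, Sum.inr 3)})

namespace ASq

section Plumb

variable {α : Type*} {G : SimpleGraph α} {M : Set (Sym2 α)}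

lemma pm_eq_of_subset {M M' : Set (Sym2 α)} (hsub : M' ⊆ M)
    (hp' : ∀ x, ∃! e, e ∈ M' ∧ x ∈ e) (hp : ∀ x, ∃! e, e ∈ M ∧ x ∈ e) : M' = M := by
  refine Set.eq_of_subset_of_subset hsub fun f hf => ?_
  obtain ⟨e, ⟨heM', hae⟩, _⟩ := hp' f.out.1
  have : e = f := (hp f.out.1).unique ⟨hsub heM', hae⟩ ⟨hf, Sym2.out_fst_mem f⟩
  exact this ▸ heM'

lemma isGFS_edgeSet (G : SimpleGraph α) : IsGlobalForcingSet G G.edgeSet :=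
  ⟨subset_rfl, fun M₁ M₂ h₁ h₂ hne heq => hne (by
    rwa [Set.inter_eq_self_of_subset_right h₁.1,
      Set.inter_eq_self_of_subset_right h₂.1] at heq)⟩

lemma gf_le {S : Set (Sym2 α)} (h : IsGlobalForcingSet G S) : gf G ≤ S.ncard :=
  Nat.sInf_le ⟨S, h, rfl⟩

lemma gf_attain (G : SimpleGraph α) :
    ∃ S, IsGlobalForcingSet G S ∧ S.ncard = gf G := by
  have h : {n | ∃ S, IsGlobalForcingSet G S ∧ S.ncard = n}.Nonempty :=
    ⟨_, G.edgeSet, isGFS_edgeSet G, rfl⟩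
  exact Nat.sInf_mem h

lemma isAFS_compl (hM : IsPM G M) : IsAntiForcingSet G M (G.edgeSet \ M) := by
  refine ⟨Set.diff_subset, Set.diff_inter_self, ⟨?_, hM.2⟩, ?_⟩
  · rw [SimpleGraph.edgeSet_deleteEdges]
    exact fun e he => ⟨hM.1 he, fun h => h.2 he⟩
  · intro M' hM'
    have hsub : M' ⊆ M := by
      intro e he
      have := hM'.1 he
      rw [SimpleGraph.edgeSet_deleteEdges] at this
      rcases this with ⟨h1, h2⟩
      by_contra h
      exact h2 ⟨h1, h⟩
    exact pm_eq_of_subset hsub hM'.2 hM.2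

lemma af_le {S : Set (Sym2 α)} (h : IsAntiForcingSet G M S) : af G M ≤ S.ncard :=
  Nat.sInf_le ⟨S, h, rfl⟩

lemma af_attain (hM : IsPM G M) :
    ∃ S, IsAntiForcingSet G M S ∧ S.ncard = af G M := by
  have h : {n | ∃ S, IsAntiForcingSet G M S ∧ S.ncard = n}.Nonempty :=
    ⟨_, _, isAFS_compl hM, rfl⟩
  exact Nat.sInf_mem h

lemma le_af {k : ℕ} (hM : IsPM G M)
    (h : ∀ S, IsAntiForcingSet G M S → k ≤ S.ncard) : k ≤ af G M := by
  refine le_csInf ⟨_, ⟨_, isAFS_compl hM, rfl⟩⟩ ?_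
  rintro n ⟨S, hS, rfl⟩
  exact h S hS

lemma Af_ge [Fintype α] (hM : IsPM G M) : af G M ≤ Af G := by
  refine le_csSup ⟨G.edgeSet.ncard, ?_⟩ ⟨M, hM, rfl⟩
  rintro n ⟨N, hN, rfl⟩
  exact le_trans (af_le (isAFS_compl hN))
    (Set.ncard_le_ncard Set.diff_subset (Set.toFinite _))

lemma Af_le {k : ℕ} (h : ∀ N, IsPM G N → af G N ≤ k) : Af G ≤ k := by
  refine csSup_le' ?_
  rintro n ⟨N, hN, rfl⟩
  exact h N hN

lemma isPM_del_of {S N : Set (Sym2 α)} (hN : IsPM G N) (h : ∀ f ∈ N, f ∉ S) :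
    IsPM (G.deleteEdges S) N := by
  refine ⟨?_, hN.2⟩
  rw [SimpleGraph.edgeSet_deleteEdges]
  exact fun e he => ⟨hN.1 he, h e he⟩

lemma pm_del_facts {H : SimpleGraph α} {S M' : Set (Sym2 α)}
    (h : IsPM (H.deleteEdges S) M') :
    M' ⊆ H.edgeSet ∧ (∀ e ∈ M', e ∉ S) := by
  constructor <;> intro e he <;>
    [exact ((SimpleGraph.edgeSet_deleteEdges S ▸ h.1) he).1;
     exact ((SimpleGraph.edgeSet_deleteEdges S ▸ h.1) he).2]

end Plumb


variable {V : Type*}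

/-- the embedding of edges -/
noncomputable abbrev ι : Sym2 V → Sym2 (V ⊕ Fin 4) := Sym2.map Sum.inl

lemma ι_inj : Function.Injective (ι (V := V)) := Sym2.map.injective Sum.inl_injective

lemma inr_not_mem_ι (i : Fin 4) (f : Sym2 V) : (Sum.inr i : V ⊕ Fin 4) ∉ ι f := by
  simp [Sym2.mem_map]

lemma inl_mem_ι (x : V) (f : Sym2 V) : (Sum.inl x : V ⊕ Fin 4) ∈ ι f ↔ x ∈ f := by
  simp [Sym2.mem_map]

/-- the six new edges -/
def newE (u v : V) : Set (Sym2 (V ⊕ Fin 4)) :=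
  {s(Sum.inl u, Sum.inr 0), s(Sum.inr 0, Sum.inr 1), s(Sum.inr 1, Sum.inr 2),
   s(Sum.inr 2, Sum.inr 3), s(Sum.inr 3, Sum.inl v), s(Sum.inr 0, Sum.inr 3)}

lemma ι_not_mem_newE {u v : V} (f : Sym2 V) : ι f ∉ newE u v := by
  induction f with
  | _ x y =>
    intro h
    simp only [newE, Set.mem_insert_iff, Set.mem_singleton_iff, Sym2.map_pair_eq] at h
    rcases h with h | h | h | h | h | h <;> simp [Sym2.eq_iff] at h

lemma edgeSet_addSquare (G : SimpleGraph V) (u v : V) :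
    (addSquare G u v).edgeSet = (ι '' (G.edgeSet \ {s(u, v)})) ∪ newE u v := by
  rw [addSquare, SimpleGraph.edgeSet_fromEdgeSet]
  rw [sdiff_eq_self_iff_disjoint.2]
  · rfl
  rw [Set.disjoint_right]
  rintro e he hd
  simp only [Sym2.mem_diagSet] at hd
  rcases he with ⟨f, hf, rfl⟩ | he
  · induction f with
    | _ x y =>
      rw [Sym2.map_pair_eq, Sym2.isDiag_iff_proj_eq] at hd
      cases Sum.inl_injective hd
      exact G.irrefl (G.mem_edgeSet.1 hf.1)
  · rcases he with h | h | h | h | h | h <;> subst h <;>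
      simp [Sym2.isDiag_iff_proj_eq] at hd

lemma ι_ne_inr_right (f : Sym2 V) (z : V ⊕ Fin 4) (i : Fin 4) :
    ι f ≠ s(z, Sum.inr i) := fun h => inr_not_mem_ι i f (h ▸ Sym2.mem_mk_right z _)

lemma ι_ne_inr_left (f : Sym2 V) (z : V ⊕ Fin 4) (i : Fin 4) :
    ι f ≠ s(Sum.inr i, z) := fun h => inr_not_mem_ι i f (h ▸ Sym2.mem_mk_left _ z)

/-- Lift of a matching avoiding `uv`, square matched as `w0w1, w2w3`. -/
def liftA (N : Set (Sym2 V)) : Set (Sym2 (V ⊕ Fin 4)) :=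
  ι '' N ∪ {s(Sum.inr 0, Sum.inr 1), s(Sum.inr 2, Sum.inr 3)}

/-- Lift of a matching avoiding `uv`, square matched as `w1w2, w0w3`. -/
def liftB (N : Set (Sym2 V)) : Set (Sym2 (V ⊕ Fin 4)) :=
  ι '' N ∪ {s(Sum.inr 1, Sum.inr 2), s(Sum.inr 0, Sum.inr 3)}

/-- Lift of a matching containing `uv`. -/
def liftC (u v : V) (N : Set (Sym2 V)) : Set (Sym2 (V ⊕ Fin 4)) :=
  ι '' (N \ {s(u, v)}) ∪
    {s(Sum.inl u, Sum.inr 0), s(Sum.inr 1, Sum.inr 2), s(Sum.inr 3, Sum.inl v)}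

lemma mem_liftA_iff {N : Set (Sym2 V)} {e : Sym2 (V ⊕ Fin 4)} :
    e ∈ liftA N ↔ (∃ f ∈ N, ι f = e) ∨ e = s(Sum.inr 0, Sum.inr 1) ∨
      e = s(Sum.inr 2, Sum.inr 3) := by
  simp only [liftA, Set.mem_union, Set.mem_image, Set.mem_insert_iff, Set.mem_singleton_iff]

lemma mem_liftB_iff {N : Set (Sym2 V)} {e : Sym2 (V ⊕ Fin 4)} :
    e ∈ liftB N ↔ (∃ f ∈ N, ι f = e) ∨ e = s(Sum.inr 1, Sum.inr 2) ∨
      e = s(Sum.inr 0, Sum.inr 3) := by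
  simp only [liftB, Set.mem_union, Set.mem_image, Set.mem_insert_iff, Set.mem_singleton_iff]

lemma mem_liftC_iff {u v : V} {N : Set (Sym2 V)} {e : Sym2 (V ⊕ Fin 4)} :
    e ∈ liftC u v N ↔ (∃ f ∈ N \ {s(u, v)}, ι f = e) ∨ e = s(Sum.inl u, Sum.inr 0) ∨
      e = s(Sum.inr 1, Sum.inr 2) ∨ e = s(Sum.inr 3, Sum.inl v) := by
  simp only [liftC, Set.mem_union, Set.mem_image, Set.mem_insert_iff, Set.mem_singleton_iff]

@[simp] lemma ι_eq_inr_right (f : Sym2 V) (z : V ⊕ Fin 4) (i : Fin 4) :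
    ι f = s(z, Sum.inr i) ↔ False := iff_false_intro (ι_ne_inr_right f z i)

@[simp] lemma ι_eq_inr_left (f : Sym2 V) (z : V ⊕ Fin 4) (i : Fin 4) :
    ι f = s(Sum.inr i, z) ↔ False := iff_false_intro (ι_ne_inr_left f z i)

example (N : Set (Sym2 V)) : s(Sum.inr 0, Sum.inr 1) ∉ liftB (V := V) N := by
  simp [mem_liftB_iff, Sym2.eq_iff]

example (N : Set (Sym2 V)) (u : V) : s(Sum.inl u, Sum.inr 0) ∉ liftA (V := V) N := by
  simp [mem_liftA_iff, Sym2.eq_iff]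

example (N : Set (Sym2 V)) : s(Sum.inr 0, Sum.inr 1) ∈ liftA (V := V) N := by
  simp [mem_liftA_iff]

lemma pair_liftA {N : Set (Sym2 V)} (hN : ∀ x : V, ∃! f, f ∈ N ∧ x ∈ f) :
    ∀ w : V ⊕ Fin 4, ∃! e, e ∈ liftA (V := V) N ∧ w ∈ e := by
  rintro (x | i)
  · obtain ⟨f, ⟨hfN, hxf⟩, hu⟩ := hN x
    refine ⟨ι f, ⟨Or.inl ⟨f, hfN, rfl⟩, (inl_mem_ι x f).2 hxf⟩, ?_⟩
    rintro e ⟨he, hxe⟩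
    rcases he with ⟨g, hg, rfl⟩ | he
    · rw [hu g ⟨hg, (inl_mem_ι x g).1 hxe⟩]
    · rcases he with rfl | rfl <;> simp at hxe
  · fin_cases i
    · refine ⟨s(Sum.inr 0, Sum.inr 1), ⟨by simp [mem_liftA_iff], by simp⟩, ?_⟩
      rintro e ⟨he, hxe⟩
      rcases he with ⟨g, hg, rfl⟩ | he
      · exact absurd hxe (inr_not_mem_ι _ _)
      · rcases he with rfl | rfl
        · rfl
        · simp at hxe
    · refine ⟨s(Sum.inr 0, Sum.inr 1), ⟨by simp [mem_liftA_iff], by simp⟩, ?_⟩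
      rintro e ⟨he, hxe⟩
      rcases he with ⟨g, hg, rfl⟩ | he
      · exact absurd hxe (inr_not_mem_ι _ _)
      · rcases he with rfl | rfl
        · rfl
        · simp at hxe
    · refine ⟨s(Sum.inr 2, Sum.inr 3), ⟨by simp [mem_liftA_iff], by simp⟩, ?_⟩
      rintro e ⟨he, hxe⟩
      rcases he with ⟨g, hg, rfl⟩ | he
      · exact absurd hxe (inr_not_mem_ι _ _)
      · rcases he with rfl | rfl
        · simp at hxe
        · rfl
    · refine ⟨s(Sum.inr 2, Sum.inr 3), ⟨by simp [mem_liftA_iff], by simp⟩, ?_⟩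
      rintro e ⟨he, hxe⟩
      rcases he with ⟨g, hg, rfl⟩ | he
      · exact absurd hxe (inr_not_mem_ι _ _)
      · rcases he with rfl | rfl
        · simp at hxe
        · rfl

lemma pair_liftB {N : Set (Sym2 V)} (hN : ∀ x : V, ∃! f, f ∈ N ∧ x ∈ f) :
    ∀ w : V ⊕ Fin 4, ∃! e, e ∈ liftB (V := V) N ∧ w ∈ e := by
  rintro (x | i)
  · obtain ⟨f, ⟨hfN, hxf⟩, hu⟩ := hN x
    refine ⟨ι f, ⟨Or.inl ⟨f, hfN, rfl⟩, (inl_mem_ι x f).2 hxf⟩, ?_⟩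
    rintro e ⟨he, hxe⟩
    rcases he with ⟨g, hg, rfl⟩ | he
    · rw [hu g ⟨hg, (inl_mem_ι x g).1 hxe⟩]
    · rcases he with rfl | rfl <;> simp at hxe
  · fin_cases i
    · refine ⟨s(Sum.inr 0, Sum.inr 3), ⟨by simp [mem_liftB_iff], by simp⟩, ?_⟩
      rintro e ⟨he, hxe⟩
      rcases he with ⟨g, hg, rfl⟩ | he
      · exact absurd hxe (inr_not_mem_ι _ _)
      · rcases he with rfl | rfl
        · simp at hxe
        · rfl
    · refine ⟨s(Sum.inr 1, Sum.inr 2), ⟨by simp [mem_liftB_iff], by simp⟩, ?_⟩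
      rintro e ⟨he, hxe⟩
      rcases he with ⟨g, hg, rfl⟩ | he
      · exact absurd hxe (inr_not_mem_ι _ _)
      · rcases he with rfl | rfl
        · rfl
        · simp at hxe
    · refine ⟨s(Sum.inr 1, Sum.inr 2), ⟨by simp [mem_liftB_iff], by simp⟩, ?_⟩
      rintro e ⟨he, hxe⟩
      rcases he with ⟨g, hg, rfl⟩ | he
      · exact absurd hxe (inr_not_mem_ι _ _)
      · rcases he with rfl | rfl
        · rfl
        · simp at hxe
    · refine ⟨s(Sum.inr 0, Sum.inr 3), ⟨by simp [mem_liftB_iff], by simp⟩, ?_⟩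
      rintro e ⟨he, hxe⟩
      rcases he with ⟨g, hg, rfl⟩ | he
      · exact absurd hxe (inr_not_mem_ι _ _)
      · rcases he with rfl | rfl
        · simp at hxe
        · rfl

lemma pair_liftC {u v : V} {N : Set (Sym2 V)} (hN : ∀ x : V, ∃! f, f ∈ N ∧ x ∈ f)
    (huvN : s(u, v) ∈ N) (huv : u ≠ v) :
    ∀ w : V ⊕ Fin 4, ∃! e, e ∈ liftC u v N ∧ w ∈ e := by
  have hCu : ∀ g ∈ N \ {s(u, v)}, (Sum.inl u : V ⊕ Fin 4) ∉ ι g := by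
    rintro g ⟨hgN, hg⟩ hmem
    exact hg (hN u |>.unique ⟨hgN, (inl_mem_ι u g).1 hmem⟩ ⟨huvN, by simp⟩)
  have hCv : ∀ g ∈ N \ {s(u, v)}, (Sum.inl v : V ⊕ Fin 4) ∉ ι g := by
    rintro g ⟨hgN, hg⟩ hmem
    exact hg (hN v |>.unique ⟨hgN, (inl_mem_ι v g).1 hmem⟩ ⟨huvN, by simp⟩)
  rintro (x | i)
  · by_cases hx : x = u
    · subst hx
      refine ⟨s(Sum.inl x, Sum.inr 0), ⟨by simp [mem_liftC_iff], by simp⟩, ?_⟩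
      rintro e ⟨he, hxe⟩
      rcases he with ⟨g, hg, rfl⟩ | he
      · exact absurd hxe (hCu g hg)
      · rcases he with rfl | rfl | rfl
        · rfl
        · simp at hxe
        · rw [Sym2.mem_iff] at hxe
          rcases hxe with h | h
          · exact absurd h (by simp)
          · exact absurd (Sum.inl_injective h) huv
    · by_cases hxv : x = v
      · subst hxv
        refine ⟨s(Sum.inr 3, Sum.inl x), ⟨by simp [mem_liftC_iff], by simp⟩, ?_⟩
        rintro e ⟨he, hxe⟩
        rcases he with ⟨g, hg, rfl⟩ | he
        · exact absurd hxe (hCv g hg)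
        · rcases he with rfl | rfl | rfl
          · rw [Sym2.mem_iff] at hxe
            rcases hxe with h | h
            · exact absurd (Sum.inl_injective h) hx
            · exact absurd h (by simp)
          · simp at hxe
          · rfl
      · obtain ⟨f, ⟨hfN, hxf⟩, hu⟩ := hN x
        have hfne : f ≠ s(u, v) := by
          rintro rfl
          rw [Sym2.mem_iff] at hxf
          tauto
        refine ⟨ι f, ⟨Or.inl ⟨f, ⟨hfN, hfne⟩, rfl⟩, (inl_mem_ι x f).2 hxf⟩, ?_⟩
        rintro e ⟨he, hxe⟩
        rcases he with ⟨g, hg, rfl⟩ | he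
        · rw [hu g ⟨hg.1, (inl_mem_ι x g).1 hxe⟩]
        · rcases he with rfl | rfl | rfl
          · rw [Sym2.mem_iff] at hxe
            rcases hxe with h | h
            · exact absurd (Sum.inl_injective h) hx
            · exact absurd h (by simp)
          · simp at hxe
          · rw [Sym2.mem_iff] at hxe
            rcases hxe with h | h
            · exact absurd h (by simp)
            · exact absurd (Sum.inl_injective h) hxv
  · fin_cases i
    · refine ⟨s(Sum.inl u, Sum.inr 0), ⟨by simp [mem_liftC_iff], by simp⟩, ?_⟩
      rintro e ⟨he, hxe⟩
      rcases he with ⟨g, hg, rfl⟩ | he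
      · exact absurd hxe (inr_not_mem_ι _ _)
      · rcases he with rfl | rfl | rfl
        · rfl
        · simp at hxe
        · simp at hxe
    · refine ⟨s(Sum.inr 1, Sum.inr 2), ⟨by simp [mem_liftC_iff], by simp⟩, ?_⟩
      rintro e ⟨he, hxe⟩
      rcases he with ⟨g, hg, rfl⟩ | he
      · exact absurd hxe (inr_not_mem_ι _ _)
      · rcases he with rfl | rfl | rfl
        · simp at hxe
        · rfl
        · simp at hxe
    · refine ⟨s(Sum.inr 1, Sum.inr 2), ⟨by simp [mem_liftC_iff], by simp⟩, ?_⟩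
      rintro e ⟨he, hxe⟩
      rcases he with ⟨g, hg, rfl⟩ | he
      · exact absurd hxe (inr_not_mem_ι _ _)
      · rcases he with rfl | rfl | rfl
        · simp at hxe
        · rfl
        · simp at hxe
    · refine ⟨s(Sum.inr 3, Sum.inl v), ⟨by simp [mem_liftC_iff], by simp⟩, ?_⟩
      rintro e ⟨he, hxe⟩
      rcases he with ⟨g, hg, rfl⟩ | he
      · exact absurd hxe (inr_not_mem_ι _ _)
      · rcases he with rfl | rfl | rfl
        · simp at hxe
        · simp at hxe
        · rfl


lemma liftA_subset {G : SimpleGraph V} {u v : V} {N : Set (Sym2 V)}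
    (hNE : N ⊆ G.edgeSet) (huvN : s(u, v) ∉ N) :
    liftA N ⊆ (addSquare G u v).edgeSet := by
  rw [edgeSet_addSquare]
  rintro e (⟨f, hf, rfl⟩ | he)
  · exact Or.inl ⟨f, ⟨hNE hf, fun h => huvN (by simpa using h ▸ hf)⟩, rfl⟩
  · rcases he with rfl | rfl <;> exact Or.inr (by simp [newE])

lemma liftB_subset {G : SimpleGraph V} {u v : V} {N : Set (Sym2 V)}
    (hNE : N ⊆ G.edgeSet) (huvN : s(u, v) ∉ N) :
    liftB N ⊆ (addSquare G u v).edgeSet := by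
  rw [edgeSet_addSquare]
  rintro e (⟨f, hf, rfl⟩ | he)
  · exact Or.inl ⟨f, ⟨hNE hf, fun h => huvN (by simpa using h ▸ hf)⟩, rfl⟩
  · rcases he with rfl | rfl <;> exact Or.inr (by simp [newE])

lemma liftC_subset {G : SimpleGraph V} {u v : V} {N : Set (Sym2 V)}
    (hNE : N ⊆ G.edgeSet) :
    liftC u v N ⊆ (addSquare G u v).edgeSet := by
  rw [edgeSet_addSquare]
  rintro e (⟨f, hf, rfl⟩ | he)
  · exact Or.inl ⟨f, ⟨hNE hf.1, hf.2⟩, rfl⟩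
  · rcases he with rfl | rfl | rfl <;> exact Or.inr (by simp [newE])

lemma isPM_liftA_del {G : SimpleGraph V} {u v : V} {N : Set (Sym2 V)}
    {S' : Set (Sym2 (V ⊕ Fin 4))} (hN : IsPM G N) (huvN : s(u, v) ∉ N)
    (hdisj : ∀ e ∈ liftA (V := V) N, e ∉ S') :
    IsPM ((addSquare G u v).deleteEdges S') (liftA N) := by
  refine ⟨?_, pair_liftA hN.2⟩
  rw [SimpleGraph.edgeSet_deleteEdges]
  exact fun e he => ⟨liftA_subset hN.1 huvN he, hdisj e he⟩

lemma isPM_liftB_del {G : SimpleGraph V} {u v : V} {N : Set (Sym2 V)}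
    {S' : Set (Sym2 (V ⊕ Fin 4))} (hN : IsPM G N) (huvN : s(u, v) ∉ N)
    (hdisj : ∀ e ∈ liftB (V := V) N, e ∉ S') :
    IsPM ((addSquare G u v).deleteEdges S') (liftB N) := by
  refine ⟨?_, pair_liftB hN.2⟩
  rw [SimpleGraph.edgeSet_deleteEdges]
  exact fun e he => ⟨liftB_subset hN.1 huvN he, hdisj e he⟩

lemma isPM_liftC_del {G : SimpleGraph V} {u v : V} {N : Set (Sym2 V)}
    {S' : Set (Sym2 (V ⊕ Fin 4))} (hN : IsPM G N) (huvN : s(u, v) ∈ N) (huv : u ≠ v)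
    (hdisj : ∀ e ∈ liftC u v N, e ∉ S') :
    IsPM ((addSquare G u v).deleteEdges S') (liftC u v N) := by
  refine ⟨?_, pair_liftC hN.2 huvN huv⟩
  rw [SimpleGraph.edgeSet_deleteEdges]
  exact fun e he => ⟨liftC_subset hN.1 he, hdisj e he⟩

lemma isPM_liftA {G : SimpleGraph V} {u v : V} {N : Set (Sym2 V)}
    (hN : IsPM G N) (huvN : s(u, v) ∉ N) : IsPM (addSquare G u v) (liftA N) :=
  ⟨liftA_subset hN.1 huvN, pair_liftA hN.2⟩

lemma isPM_liftB {G : SimpleGraph V} {u v : V} {N : Set (Sym2 V)}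
    (hN : IsPM G N) (huvN : s(u, v) ∉ N) : IsPM (addSquare G u v) (liftB N) :=
  ⟨liftB_subset hN.1 huvN, pair_liftB hN.2⟩

lemma isPM_liftC {G : SimpleGraph V} {u v : V} {N : Set (Sym2 V)}
    (hN : IsPM G N) (huvN : s(u, v) ∈ N) (huv : u ≠ v) :
    IsPM (addSquare G u v) (liftC u v N) :=
  ⟨liftC_subset hN.1, pair_liftC hN.2 huvN huv⟩

lemma mem_of_ι_mem_liftA {N : Set (Sym2 V)} {f : Sym2 V} (h : ι f ∈ liftA N) : f ∈ N := by
  rcases mem_liftA_iff.1 h with ⟨g, hg, hgf⟩ | h | h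
  · rwa [← ι_inj hgf]
  · exact absurd h (ι_ne_inr_left f _ 0)
  · exact absurd h (ι_ne_inr_left f _ 2)

lemma mem_of_ι_mem_liftB {N : Set (Sym2 V)} {f : Sym2 V} (h : ι f ∈ liftB N) : f ∈ N := by
  rcases mem_liftB_iff.1 h with ⟨g, hg, hgf⟩ | h | h
  · rwa [← ι_inj hgf]
  · exact absurd h (ι_ne_inr_left f _ 1)
  · exact absurd h (ι_ne_inr_left f _ 0)

lemma mem_of_ι_mem_liftC {u v : V} {N : Set (Sym2 V)} {f : Sym2 V}
    (h : ι f ∈ liftC u v N) : f ∈ N \ {s(u, v)} := by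
  rcases mem_liftC_iff.1 h with ⟨g, hg, hgf⟩ | h | h | h
  · rwa [← ι_inj hgf]
  · exact absurd h (ι_ne_inr_right f _ 0)
  · exact absurd h (ι_ne_inr_left f _ 1)
  · exact absurd h (ι_ne_inr_left f _ 3)

lemma liftA_inj {N₁ N₂ : Set (Sym2 V)} (h : liftA N₁ = liftA N₂) : N₁ = N₂ := by
  ext f
  constructor <;> intro hf
  · exact mem_of_ι_mem_liftA (h ▸ (Or.inl ⟨f, hf, rfl⟩ : ι f ∈ liftA N₁))
  · exact mem_of_ι_mem_liftA (h ▸ (Or.inl ⟨f, hf, rfl⟩ : ι f ∈ liftA N₂))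

lemma liftB_inj {N₁ N₂ : Set (Sym2 V)} (h : liftB N₁ = liftB N₂) : N₁ = N₂ := by
  ext f
  constructor <;> intro hf
  · exact mem_of_ι_mem_liftB (h ▸ (Or.inl ⟨f, hf, rfl⟩ : ι f ∈ liftB N₁))
  · exact mem_of_ι_mem_liftB (h ▸ (Or.inl ⟨f, hf, rfl⟩ : ι f ∈ liftB N₂))

lemma liftC_inj {u v : V} {N₁ N₂ : Set (Sym2 V)} (h₁ : s(u, v) ∈ N₁) (h₂ : s(u, v) ∈ N₂)
    (h : liftC u v N₁ = liftC u v N₂) : N₁ = N₂ := by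
  ext f
  by_cases hf : f = s(u, v)
  · subst hf; simp [h₁, h₂]
  constructor <;> intro hfN
  · have : ι f ∈ liftC u v N₁ := Or.inl ⟨f, ⟨hfN, hf⟩, rfl⟩
    rw [h] at this
    exact (mem_of_ι_mem_liftC this).1
  · have : ι f ∈ liftC u v N₂ := Or.inl ⟨f, ⟨hfN, hf⟩, rfl⟩
    rw [← h] at this
    exact (mem_of_ι_mem_liftC this).1

lemma liftA_ne_liftB {N₁ N₂ : Set (Sym2 V)} : liftA N₁ ≠ liftB N₂ := by
  intro h
  have : s(Sum.inr 0, Sum.inr 1) ∈ liftB (V := V) N₂ := h ▸ (by simp [mem_liftA_iff])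
  simp [mem_liftB_iff, Sym2.eq_iff] at this

lemma liftA_ne_liftC {u v : V} {N₁ N₂ : Set (Sym2 V)} : liftA N₁ ≠ liftC u v N₂ := by
  intro h
  have : s(Sum.inr 0, Sum.inr 1) ∈ liftC u v N₂ := h ▸ (by simp [mem_liftA_iff])
  simp [mem_liftC_iff, Sym2.eq_iff] at this

lemma liftB_ne_liftC {u v : V} {N₁ N₂ : Set (Sym2 V)} : liftB N₁ ≠ liftC u v N₂ := by
  intro h
  have : s(Sum.inr 0, Sum.inr 3) ∈ liftC u v N₂ := h ▸ (by simp [mem_liftB_iff])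
  simp [mem_liftC_iff, Sym2.eq_iff] at this


/-- Every perfect matching of (a spanning subgraph of) `addSquare G u v` is of type
`liftA`, `liftB` or `liftC`. -/
lemma classify {G : SimpleGraph V} {u v : V} (huv : G.Adj u v)
    {M' : Set (Sym2 (V ⊕ Fin 4))}
    (hsub : M' ⊆ (addSquare G u v).edgeSet)
    (hpair : ∀ w : V ⊕ Fin 4, ∃! e, e ∈ M' ∧ w ∈ e) :
    (∃ N, IsPM G N ∧ s(u, v) ∉ N ∧ (M' = liftA N ∨ M' = liftB N)) ∨
    (∃ N, IsPM G N ∧ s(u, v) ∈ N ∧ M' = liftC u v N) := by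
  have hmem : ∀ e ∈ M', (∃ f ∈ G.edgeSet \ {s(u, v)}, ι f = e) ∨ e ∈ newE u v := by
    intro e he
    have := hsub he
    rw [edgeSet_addSquare] at this
    rcases this with ⟨f, hf, rfl⟩ | h
    · exact Or.inl ⟨f, hf, rfl⟩
    · exact Or.inr h
  set N₀ : Set (Sym2 V) := {f | ι f ∈ M'} with hN₀def
  have hN₀E : N₀ ⊆ G.edgeSet \ {s(u, v)} := by
    intro f hf
    rcases hmem (ι f) hf with ⟨g, hg, hgf⟩ | h
    · rwa [← ι_inj hgf]
    · exact absurd h (ι_not_mem_newE f)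
  have huvN₀ : s(u, v) ∉ N₀ := fun h => (hN₀E h).2 rfl
  -- the unique edge at `inr 1`
  obtain ⟨e1, ⟨he1, hm1⟩, hu1⟩ := hpair (Sum.inr 1)
  rcases hmem e1 he1 with ⟨f, hf, rfl⟩ | h1
  · exact absurd hm1 (inr_not_mem_ι _ _)
  rcases h1 with rfl | rfl | rfl | rfl | rfl | rfl
  · simp at hm1
  · -- e1 = s(inr 0, inr 1) : type A
    obtain ⟨e2, ⟨he2, hm2⟩, hu2⟩ := hpair (Sum.inr 2)
    rcases hmem e2 he2 with ⟨f, hf, rfl⟩ | h2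
    · exact absurd hm2 (inr_not_mem_ι _ _)
    rcases h2 with rfl | rfl | rfl | rfl | rfl | rfl
    · simp at hm2
    · simp at hm2
    · -- e2 = s(inr 1, inr 2) : conflict at inr 1
      have := (hpair (Sum.inr 1)).unique ⟨he2, by simp⟩ ⟨he1, by simp⟩
      simp [Sym2.eq_iff] at this
    · -- e2 = s(inr 2, inr 3)
      have ha0 : s(Sum.inl u, Sum.inr 0) ∉ M' := by
        intro h
        have := (hpair (Sum.inr 0)).unique ⟨h, by simp⟩ ⟨he1, by simp⟩
        simp [Sym2.eq_iff] at this
      have ha2 : s(Sum.inr 1, Sum.inr 2) ∉ M' := by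
        intro h
        have := (hpair (Sum.inr 1)).unique ⟨h, by simp⟩ ⟨he1, by simp⟩
        simp [Sym2.eq_iff] at this
      have ha4 : s(Sum.inr 3, Sum.inl v) ∉ M' := by
        intro h
        have := (hpair (Sum.inr 3)).unique ⟨h, by simp⟩ ⟨he2, by simp⟩
        simp [Sym2.eq_iff] at this
      have ha5 : s(Sum.inr 0, Sum.inr 3) ∉ M' := by
        intro h
        have := (hpair (Sum.inr 0)).unique ⟨h, by simp⟩ ⟨he1, by simp⟩
        simp [Sym2.eq_iff] at this
      have hNpair : ∀ x : V, ∃! f, f ∈ N₀ ∧ x ∈ f := by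
        intro x
        obtain ⟨e, ⟨heM, hxe⟩, hue⟩ := hpair (Sum.inl x)
        rcases hmem e heM with ⟨f, hf, rfl⟩ | h
        · refine ⟨f, ⟨heM, (inl_mem_ι x f).1 hxe⟩, ?_⟩
          intro g ⟨hgN, hxg⟩
          exact ι_inj (hue (ι g) ⟨hgN, (inl_mem_ι x g).2 hxg⟩)
        · exfalso
          rcases h with rfl | rfl | rfl | rfl | rfl | rfl
          · exact ha0 heM
          · exact absurd hxe (by simp)
          · exact absurd hxe (by simp)
          · exact absurd hxe (by simp)
          · exact ha4 heM
          · exact absurd hxe (by simp)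
      refine Or.inl ⟨N₀, ⟨fun f hf => (hN₀E hf).1, hNpair⟩, huvN₀, Or.inl ?_⟩
      apply Set.eq_of_subset_of_subset
      · intro e heM
        rcases hmem e heM with ⟨f, hf, rfl⟩ | h
        · exact Or.inl ⟨f, heM, rfl⟩
        · rcases h with rfl | rfl | rfl | rfl | rfl | rfl
          · exact absurd heM ha0
          · exact Or.inr (by simp)
          · exact absurd heM ha2
          · exact Or.inr (by simp)
          · exact absurd heM ha4
          · exact absurd heM ha5
      · rintro e (⟨f, hf, rfl⟩ | h)
        · exact hf
        · rcases h with rfl | rfl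
          · exact he1
          · exact he2
    · simp at hm2
    · simp at hm2
  · -- e1 = s(inr 1, inr 2) : type B or C
    obtain ⟨e0, ⟨he0, hm0⟩, hu0⟩ := hpair (Sum.inr 0)
    rcases hmem e0 he0 with ⟨f, hf, rfl⟩ | h0
    · exact absurd hm0 (inr_not_mem_ι _ _)
    have ha1 : s(Sum.inr 0, Sum.inr 1) ∉ M' := by
      intro h
      have := (hpair (Sum.inr 1)).unique ⟨h, by simp⟩ ⟨he1, by simp⟩
      simp [Sym2.eq_iff] at this
    have ha3 : s(Sum.inr 2, Sum.inr 3) ∉ M' := by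
      intro h
      have := (hpair (Sum.inr 2)).unique ⟨h, by simp⟩ ⟨he1, by simp⟩
      simp [Sym2.eq_iff] at this
    rcases h0 with rfl | rfl | rfl | rfl | rfl | rfl
    · -- e0 = s(inl u, inr 0) : type C
      have ha5 : s(Sum.inr 0, Sum.inr 3) ∉ M' := by
        intro h
        have := (hpair (Sum.inr 0)).unique ⟨h, by simp⟩ ⟨he0, by simp⟩
        simp [Sym2.eq_iff] at this
      obtain ⟨e3, ⟨he3, hm3⟩, hu3⟩ := hpair (Sum.inr 3)
      rcases hmem e3 he3 with ⟨f, hf, rfl⟩ | h3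
      · exact absurd hm3 (inr_not_mem_ι _ _)
      rcases h3 with rfl | rfl | rfl | rfl | rfl | rfl
      · simp at hm3
      · simp at hm3
      · simp at hm3
      · exact absurd he3 ha3
      · -- e3 = s(inr 3, inl v)
        have hxu : ∀ g ∈ N₀, (u : V) ∉ g := by
          intro g hg hug
          have := (hpair (Sum.inl u)).unique ⟨hg, (inl_mem_ι u g).2 hug⟩ ⟨he0, by simp⟩
          exact ι_ne_inr_right g _ 0 this
        have hxv : ∀ g ∈ N₀, (v : V) ∉ g := by
          intro g hg hvg
          have := (hpair (Sum.inl v)).unique ⟨hg, (inl_mem_ι v g).2 hvg⟩ ⟨he3, by simp⟩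
          exact ι_ne_inr_left g _ 3 this
        set N : Set (Sym2 V) := insert s(u, v) N₀ with hNdef
        have hNpair : ∀ x : V, ∃! f, f ∈ N ∧ x ∈ f := by
          intro x
          by_cases hx : x = u
          · subst hx
            refine ⟨s(x, v), ⟨Set.mem_insert _ _, by simp⟩, ?_⟩
            rintro g ⟨hgN, hxg⟩
            rcases hgN with rfl | hgN
            · rfl
            · exact absurd hxg (hxu g hgN)
          by_cases hxv' : x = v
          · subst hxv'
            refine ⟨s(u, x), ⟨Set.mem_insert _ _, by simp⟩, ?_⟩
            rintro g ⟨hgN, hxg⟩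
            rcases hgN with rfl | hgN
            · rfl
            · exact absurd hxg (hxv g hgN)
          obtain ⟨e, ⟨heM, hxe⟩, hue⟩ := hpair (Sum.inl x)
          rcases hmem e heM with ⟨f, hf, rfl⟩ | h
          · refine ⟨f, ⟨Set.mem_insert_of_mem _ heM, (inl_mem_ι x f).1 hxe⟩, ?_⟩
            rintro g ⟨hgN, hxg⟩
            rcases hgN with rfl | hgN
            · rw [Sym2.mem_iff] at hxg; tauto
            · exact ι_inj (hue (ι g) ⟨hgN, (inl_mem_ι x g).2 hxg⟩)
          · exfalso
            rcases h with rfl | rfl | rfl | rfl | rfl | rfl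
            · rw [Sym2.mem_iff] at hxe
              rcases hxe with h | h
              · exact hx (Sum.inl_injective h)
              · exact absurd h (by simp)
            · exact absurd hxe (by simp)
            · exact absurd hxe (by simp)
            · exact absurd hxe (by simp)
            · rw [Sym2.mem_iff] at hxe
              rcases hxe with h | h
              · exact absurd h (by simp)
              · exact hxv' (Sum.inl_injective h)
            · exact absurd hxe (by simp)
        have hNE : N ⊆ G.edgeSet := by
          rintro f (rfl | hf)
          · exact huv
          · exact (hN₀E hf).1
        have hNdiff : N \ {s(u, v)} = N₀ := by
          rw [hNdef]
          ext g
          simp only [Set.mem_diff, Set.mem_insert_iff, Set.mem_singleton_iff]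
          constructor
          · rintro ⟨rfl | hg, hne⟩
            · exact absurd rfl hne
            · exact hg
          · intro hg
            exact ⟨Or.inr hg, fun h => huvN₀ (h ▸ hg)⟩
        refine Or.inr ⟨N, ⟨hNE, hNpair⟩, Set.mem_insert _ _, ?_⟩
        apply Set.eq_of_subset_of_subset
        · intro e heM
          rcases hmem e heM with ⟨f, hf, rfl⟩ | h
          · exact Or.inl ⟨f, hNdiff ▸ heM, rfl⟩
          · rcases h with rfl | rfl | rfl | rfl | rfl | rfl
            · exact Or.inr (by simp)
            · exact absurd heM ha1
            · exact Or.inr (by simp)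
            · exact absurd heM ha3
            · exact Or.inr (by simp)
            · exact absurd heM ha5
        · rintro e (⟨f, hf, rfl⟩ | h)
          · exact (hNdiff ▸ hf : f ∈ N₀)
          · rcases h with rfl | rfl | rfl
            · exact he0
            · exact he1
            · exact he3
      · exact absurd he3 ha5
    · exact absurd he0 ha1
    · simp at hm0
    · simp at hm0
    · simp at hm0
    · -- e0 = s(inr 0, inr 3) : type B
      have ha0 : s(Sum.inl u, Sum.inr 0) ∉ M' := by
        intro h
        have := (hpair (Sum.inr 0)).unique ⟨h, by simp⟩ ⟨he0, by simp⟩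
        simp [Sym2.eq_iff] at this
      have ha4 : s(Sum.inr 3, Sum.inl v) ∉ M' := by
        intro h
        have := (hpair (Sum.inr 3)).unique ⟨h, by simp⟩ ⟨he0, by simp⟩
        simp [Sym2.eq_iff] at this
      have hNpair : ∀ x : V, ∃! f, f ∈ N₀ ∧ x ∈ f := by
        intro x
        obtain ⟨e, ⟨heM, hxe⟩, hue⟩ := hpair (Sum.inl x)
        rcases hmem e heM with ⟨f, hf, rfl⟩ | h
        · refine ⟨f, ⟨heM, (inl_mem_ι x f).1 hxe⟩, ?_⟩
          intro g ⟨hgN, hxg⟩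
          exact ι_inj (hue (ι g) ⟨hgN, (inl_mem_ι x g).2 hxg⟩)
        · exfalso
          rcases h with rfl | rfl | rfl | rfl | rfl | rfl
          · exact ha0 heM
          · exact absurd hxe (by simp)
          · exact absurd hxe (by simp)
          · exact absurd hxe (by simp)
          · exact ha4 heM
          · exact absurd hxe (by simp)
      refine Or.inl ⟨N₀, ⟨fun f hf => (hN₀E hf).1, hNpair⟩, huvN₀, Or.inr ?_⟩
      apply Set.eq_of_subset_of_subset
      · intro e heM
        rcases hmem e heM with ⟨f, hf, rfl⟩ | h
        · exact Or.inl ⟨f, heM, rfl⟩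
        · rcases h with rfl | rfl | rfl | rfl | rfl | rfl
          · exact absurd heM ha0
          · exact absurd heM ha1
          · exact Or.inr (by simp)
          · exact absurd heM ha3
          · exact absurd heM ha4
          · exact Or.inr (by simp)
      · rintro e (⟨f, hf, rfl⟩ | h)
        · exact hf
        · rcases h with rfl | rfl
          · exact he1
          · exact he0
  · simp at hm1
  · simp at hm1
  · simp at hm1


section Count

variable [Fintype V]

lemma count_aux {S' : Set (Sym2 (V ⊕ Fin 4))} (X : Set (Sym2 (V ⊕ Fin 4)))
    (hX : X ⊆ S') (hXι : ∀ e ∈ X, ∀ f : Sym2 V, ι f ≠ e) :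
    {f : Sym2 V | ι f ∈ S'}.ncard + X.ncard ≤ S'.ncard := by
  have hdisj : Disjoint (ι '' {f : Sym2 V | ι f ∈ S'}) X := by
    rw [Set.disjoint_left]
    rintro e ⟨f, hf, rfl⟩ heX
    exact hXι _ heX f rfl
  have hsub : ι '' {f : Sym2 V | ι f ∈ S'} ∪ X ⊆ S' := by
    rintro e (⟨f, hf, rfl⟩ | he)
    · exact hf
    · exact hX he
  calc {f : Sym2 V | ι f ∈ S'}.ncard + X.ncard
      = (ι '' {f : Sym2 V | ι f ∈ S'}).ncard + X.ncard := by
        rw [Set.ncard_image_of_injective _ ι_inj]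
    _ = (ι '' {f : Sym2 V | ι f ∈ S'} ∪ X).ncard :=
        (Set.ncard_union_eq hdisj (Set.toFinite _) (Set.toFinite _)).symm
    _ ≤ S'.ncard := Set.ncard_le_ncard hsub (Set.toFinite _)

lemma size_union1 (T : Set (Sym2 V)) (a : Sym2 (V ⊕ Fin 4)) (ha : ∀ f : Sym2 V, ι f ≠ a) :
    (ι '' T ∪ {a}).ncard = T.ncard + 1 := by
  rw [Set.ncard_union_eq ?_ (Set.toFinite _) (Set.toFinite _),
    Set.ncard_image_of_injective _ ι_inj, Set.ncard_singleton]
  rw [Set.disjoint_left]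
  rintro e ⟨f, hf, rfl⟩ he
  exact ha f (by simpa using he)

lemma size_union2 (T : Set (Sym2 V)) (a b : Sym2 (V ⊕ Fin 4)) (hab : a ≠ b)
    (ha : ∀ f : Sym2 V, ι f ≠ a) (hb : ∀ f : Sym2 V, ι f ≠ b) :
    (ι '' T ∪ {a, b}).ncard = T.ncard + 2 := by
  rw [Set.ncard_union_eq ?_ (Set.toFinite _) (Set.toFinite _),
    Set.ncard_image_of_injective _ ι_inj, Set.ncard_pair hab]
  rw [Set.disjoint_left]
  rintro e ⟨f, hf, rfl⟩ he
  rcases he with rfl | rfl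
  · exact ha f rfl
  · exact hb f rfl

end Count


section Table

variable {u v : V} {N : Set (Sym2 V)}

lemma ι_mem_liftA_iff {f : Sym2 V} : ι f ∈ liftA N ↔ f ∈ N :=
  ⟨mem_of_ι_mem_liftA, fun h => Or.inl ⟨f, h, rfl⟩⟩

lemma ι_mem_liftB_iff {f : Sym2 V} : ι f ∈ liftB N ↔ f ∈ N :=
  ⟨mem_of_ι_mem_liftB, fun h => Or.inl ⟨f, h, rfl⟩⟩

lemma ι_mem_liftC_iff {f : Sym2 V} : ι f ∈ liftC u v N ↔ f ∈ N \ {s(u, v)} :=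
  ⟨mem_of_ι_mem_liftC, fun h => Or.inl ⟨f, h, rfl⟩⟩

lemma a0_not_liftA : s(Sum.inl u, Sum.inr 0) ∉ liftA N := by
  simp [mem_liftA_iff, Sym2.eq_iff]

lemma a0_not_liftB : s(Sum.inl u, Sum.inr 0) ∉ liftB N := by
  simp [mem_liftB_iff, Sym2.eq_iff]

lemma a2_not_liftA : s(Sum.inr 1, Sum.inr 2) ∉ liftA (V := V) N := by
  simp [mem_liftA_iff, Sym2.eq_iff]

lemma a4_not_liftA : s(Sum.inr 3, Sum.inl v) ∉ liftA N := by
  simp [mem_liftA_iff, Sym2.eq_iff]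

lemma a5_not_liftA : s(Sum.inr 0, Sum.inr 3) ∉ liftA (V := V) N := by
  simp [mem_liftA_iff, Sym2.eq_iff]

lemma a1_not_liftB : s(Sum.inr 0, Sum.inr 1) ∉ liftB (V := V) N := by
  simp [mem_liftB_iff, Sym2.eq_iff]

lemma a3_not_liftB : s(Sum.inr 2, Sum.inr 3) ∉ liftB (V := V) N := by
  simp [mem_liftB_iff, Sym2.eq_iff]

lemma a4_not_liftB : s(Sum.inr 3, Sum.inl v) ∉ liftB N := by
  simp [mem_liftB_iff, Sym2.eq_iff]

lemma a1_not_liftC : s(Sum.inr 0, Sum.inr 1) ∉ liftC u v N := by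
  simp [mem_liftC_iff, Sym2.eq_iff]

lemma a3_not_liftC : s(Sum.inr 2, Sum.inr 3) ∉ liftC u v N := by
  simp [mem_liftC_iff, Sym2.eq_iff]

lemma a5_not_liftC : s(Sum.inr 0, Sum.inr 3) ∉ liftC u v N := by
  simp [mem_liftC_iff, Sym2.eq_iff]

lemma a1_mem_liftA : s(Sum.inr 0, Sum.inr 1) ∈ liftA (V := V) N := by
  simp [mem_liftA_iff]

lemma a3_mem_liftA : s(Sum.inr 2, Sum.inr 3) ∈ liftA (V := V) N := by
  simp [mem_liftA_iff]

lemma a2_mem_liftB : s(Sum.inr 1, Sum.inr 2) ∈ liftB (V := V) N := by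
  simp [mem_liftB_iff]

lemma a5_mem_liftB : s(Sum.inr 0, Sum.inr 3) ∈ liftB (V := V) N := by
  simp [mem_liftB_iff]

lemma a0_mem_liftC : s(Sum.inl u, Sum.inr 0) ∈ liftC u v N := by
  simp [mem_liftC_iff]

lemma a2_mem_liftC : s(Sum.inr 1, Sum.inr 2) ∈ liftC u v N := by
  simp [mem_liftC_iff]

lemma a4_mem_liftC : s(Sum.inr 3, Sum.inl v) ∈ liftC u v N := by
  simp [mem_liftC_iff]

/-- The common shape of perfect matchings of `addSquare G u v`. -/
def Shape (u v : V) (N : Set (Sym2 V)) (M' : Set (Sym2 (V ⊕ Fin 4))) : Prop :=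
  (s(u, v) ∉ N ∧ (M' = liftA N ∨ M' = liftB N)) ∨ (s(u, v) ∈ N ∧ M' = liftC u v N)

lemma classify' {G : SimpleGraph V} (huv : G.Adj u v) {M' : Set (Sym2 (V ⊕ Fin 4))}
    (h : IsPM (addSquare G u v) M') : ∃ N, IsPM G N ∧ Shape u v N M' := by
  rcases classify huv h.1 h.2 with ⟨N, hN, h1, h2⟩ | ⟨N, hN, h1, h2⟩
  · exact ⟨N, hN, Or.inl ⟨h1, h2⟩⟩
  · exact ⟨N, hN, Or.inr ⟨h1, h2⟩⟩

lemma classify_del {G : SimpleGraph V} (huv : G.Adj u v) {S' M' : Set (Sym2 (V ⊕ Fin 4))}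
    (h : IsPM ((addSquare G u v).deleteEdges S') M') : ∃ N, IsPM G N ∧ Shape u v N M' := by
  rcases classify huv (pm_del_facts h).1 h.2 with ⟨N, hN, h1, h2⟩ | ⟨N, hN, h1, h2⟩
  · exact ⟨N, hN, Or.inl ⟨h1, h2⟩⟩
  · exact ⟨N, hN, Or.inr ⟨h1, h2⟩⟩

lemma shape_ι_iff {N : Set (Sym2 V)} {M' : Set (Sym2 (V ⊕ Fin 4))}
    (h : Shape u v N M') (f : Sym2 V) (hf : f ≠ s(u, v)) : (ι f ∈ M' ↔ f ∈ N) := by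
  rcases h with ⟨h1, rfl | rfl⟩ | ⟨h1, rfl⟩
  · exact ι_mem_liftA_iff
  · exact ι_mem_liftB_iff
  · rw [ι_mem_liftC_iff]
    exact ⟨fun h => h.1, fun h => ⟨h, hf⟩⟩

lemma shape_a0_iff {N : Set (Sym2 V)} {M' : Set (Sym2 (V ⊕ Fin 4))}
    (h : Shape u v N M') : (s(Sum.inl u, Sum.inr 0) ∈ M' ↔ s(u, v) ∈ N) := by
  rcases h with ⟨h1, rfl | rfl⟩ | ⟨h1, rfl⟩
  · exact iff_of_false a0_not_liftA h1
  · exact iff_of_false a0_not_liftB h1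
  · exact iff_of_true a0_mem_liftC h1

end Table


lemma distinguish_final {u v : V} {N : Set (Sym2 V)} {M₁' M₂' : Set (Sym2 (V ⊕ Fin 4))}
    (hsh₁ : Shape u v N M₁') (hsh₂ : Shape u v N M₂') (hne : M₁' ≠ M₂')
    (ha1 : s(Sum.inr 0, Sum.inr 1) ∈ M₁' ↔ s(Sum.inr 0, Sum.inr 1) ∈ M₂') : False := by
  rcases hsh₁ with ⟨h1, rfl | rfl⟩ | ⟨h1, rfl⟩ <;>
    rcases hsh₂ with ⟨h2, rfl | rfl⟩ | ⟨h2, rfl⟩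
  · exact hne rfl
  · exact a1_not_liftB (ha1.1 a1_mem_liftA)
  · exact h1 h2
  · exact a1_not_liftB (ha1.2 a1_mem_liftA)
  · exact hne rfl
  · exact h1 h2
  · exact h2 h1
  · exact h2 h1
  · exact hne rfl

section Main

variable [Fintype V] {G : SimpleGraph V} {u v : V} {M : Set (Sym2 V)}

lemma gf_upper (huv : G.Adj u v) : gf (addSquare G u v) ≤ gf G + 1 := by
  obtain ⟨S, hS, hcard⟩ := gf_attain G
  have hSE := hS.1
  by_cases huvS : s(u, v) ∈ S
  · set S' : Set (Sym2 (V ⊕ Fin 4)) :=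
      ι '' (S \ {s(u, v)}) ∪ {s(Sum.inr 0, Sum.inr 1), s(Sum.inl u, Sum.inr 0)} with hS'def
    have ha1S' : s(Sum.inr 0, Sum.inr 1) ∈ S' := Or.inr (by simp)
    have ha0S' : s(Sum.inl u, Sum.inr 0) ∈ S' := Or.inr (by simp)
    have key : IsGlobalForcingSet (addSquare G u v) S' := by
      constructor
      · rintro e (⟨f, hf, rfl⟩ | he)
        · rw [edgeSet_addSquare]
          exact Or.inl ⟨f, ⟨hSE hf.1, hf.2⟩, rfl⟩
        · rw [edgeSet_addSquare]
          rcases he with rfl | rfl <;> exact Or.inr (by simp [newE])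
      · intro M₁' M₂' h₁ h₂ hne heq
        obtain ⟨N₁, hN₁, hsh₁⟩ := classify' huv h₁
        obtain ⟨N₂, hN₂, hsh₂⟩ := classify' huv h₂
        have dir : ∀ {Na Nb : Set (Sym2 V)} {Ma Mb : Set (Sym2 (V ⊕ Fin 4))},
            Shape u v Na Ma → Shape u v Nb Mb → S' ∩ Ma = S' ∩ Mb →
            S ∩ Na ⊆ S ∩ Nb := by
          intro Na Nb Ma Mb hsa hsb he f hf
          refine ⟨hf.1, ?_⟩
          by_cases hfuv : f = s(u, v)
          · subst hfuv
            have h1 : s(Sum.inl u, Sum.inr 0) ∈ S' ∩ Ma :=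
              ⟨ha0S', (shape_a0_iff hsa).2 hf.2⟩
            rw [he] at h1
            exact (shape_a0_iff hsb).1 h1.2
          · have h1 : ι f ∈ S' ∩ Ma :=
              ⟨Or.inl ⟨f, ⟨hf.1, hfuv⟩, rfl⟩, (shape_ι_iff hsa f hfuv).2 hf.2⟩
            rw [he] at h1
            exact (shape_ι_iff hsb f hfuv).1 h1.2
        have hSN : S ∩ N₁ = S ∩ N₂ :=
          Set.eq_of_subset_of_subset (dir hsh₁ hsh₂ heq) (dir hsh₂ hsh₁ heq.symm)
        have hNN : N₁ = N₂ := by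
          by_contra hnn
          exact hS.2 N₁ N₂ hN₁ hN₂ hnn hSN
        subst hNN
        refine distinguish_final hsh₁ hsh₂ hne ?_
        constructor
        · intro h
          have h' : s(Sum.inr 0, Sum.inr 1) ∈ S' ∩ M₁' := ⟨ha1S', h⟩
          rw [heq] at h'
          exact h'.2
        · intro h
          have h' : s(Sum.inr 0, Sum.inr 1) ∈ S' ∩ M₂' := ⟨ha1S', h⟩
          rw [← heq] at h'
          exact h'.2
    have hsize : S'.ncard = (S \ {s(u, v)}).ncard + 2 :=
      size_union2 _ _ _ (by simp [Sym2.eq_iff])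
        (fun f => ι_ne_inr_left f _ 0) (fun f => ι_ne_inr_right f _ 0)
    have hpos : 0 < S.ncard := (Set.ncard_pos (Set.toFinite _)).2 ⟨_, huvS⟩
    have hdiff : (S \ {s(u, v)}).ncard = S.ncard - 1 :=
      Set.ncard_diff_singleton_of_mem huvS
    calc gf (addSquare G u v) ≤ S'.ncard := gf_le key
      _ ≤ gf G + 1 := by omega
  · set S' : Set (Sym2 (V ⊕ Fin 4)) := ι '' S ∪ {s(Sum.inr 0, Sum.inr 1)} with hS'def
    have ha1S' : s(Sum.inr 0, Sum.inr 1) ∈ S' := Or.inr (by simp)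
    have key : IsGlobalForcingSet (addSquare G u v) S' := by
      constructor
      · rintro e (⟨f, hf, rfl⟩ | he)
        · rw [edgeSet_addSquare]
          exact Or.inl ⟨f, ⟨hSE hf, fun h => huvS (by simpa using h ▸ hf)⟩, rfl⟩
        · rw [edgeSet_addSquare]
          rcases he with rfl
          exact Or.inr (by simp [newE])
      · intro M₁' M₂' h₁ h₂ hne heq
        obtain ⟨N₁, hN₁, hsh₁⟩ := classify' huv h₁
        obtain ⟨N₂, hN₂, hsh₂⟩ := classify' huv h₂
        have dir : ∀ {Na Nb : Set (Sym2 V)} {Ma Mb : Set (Sym2 (V ⊕ Fin 4))},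
            Shape u v Na Ma → Shape u v Nb Mb → S' ∩ Ma = S' ∩ Mb →
            S ∩ Na ⊆ S ∩ Nb := by
          intro Na Nb Ma Mb hsa hsb he f hf
          refine ⟨hf.1, ?_⟩
          have hfuv : f ≠ s(u, v) := fun h => huvS (h ▸ hf.1)
          have h1 : ι f ∈ S' ∩ Ma :=
            ⟨Or.inl ⟨f, hf.1, rfl⟩, (shape_ι_iff hsa f hfuv).2 hf.2⟩
          rw [he] at h1
          exact (shape_ι_iff hsb f hfuv).1 h1.2
        have hSN : S ∩ N₁ = S ∩ N₂ :=
          Set.eq_of_subset_of_subset (dir hsh₁ hsh₂ heq) (dir hsh₂ hsh₁ heq.symm)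
        have hNN : N₁ = N₂ := by
          by_contra hnn
          exact hS.2 N₁ N₂ hN₁ hN₂ hnn hSN
        subst hNN
        refine distinguish_final hsh₁ hsh₂ hne ?_
        constructor
        · intro h
          have h' : s(Sum.inr 0, Sum.inr 1) ∈ S' ∩ M₁' := ⟨ha1S', h⟩
          rw [heq] at h'
          exact h'.2
        · intro h
          have h' : s(Sum.inr 0, Sum.inr 1) ∈ S' ∩ M₂' := ⟨ha1S', h⟩
          rw [← heq] at h'
          exact h'.2
    have hsize : S'.ncard = S.ncard + 1 :=
      size_union1 _ _ (fun f => ι_ne_inr_left f _ 0)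
    calc gf (addSquare G u v) ≤ S'.ncard := gf_le key
      _ = gf G + 1 := by omega

lemma exists_diff {S' A B : Set (Sym2 (V ⊕ Fin 4))} (hne : S' ∩ A ≠ S' ∩ B) :
    ∃ e ∈ S', (e ∈ A ∧ e ∉ B) ∨ (e ∈ B ∧ e ∉ A) := by
  by_contra h
  push_neg at h
  apply hne
  ext e
  simp only [Set.mem_inter_iff]
  constructor
  · rintro ⟨heS, heA⟩
    exact ⟨heS, (h e heS).1 heA⟩
  · rintro ⟨heS, heB⟩
    exact ⟨heS, (h e heS).2 heB⟩

lemma gf_lower (huv : G.Adj u v) (hM : IsPM G M) (heM : s(u, v) ∉ M) :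
    gf G + 1 ≤ gf (addSquare G u v) := by
  obtain ⟨S', hS', hcard⟩ := gf_attain (addSquare G u v)
  set S₀ : Set (Sym2 V) := {f | ι f ∈ S'} with hS₀def
  have hS₀E : S₀ ⊆ G.edgeSet \ {s(u, v)} := by
    intro f hf
    have := hS'.1 hf
    rw [edgeSet_addSquare] at this
    rcases this with ⟨g, hg, hgf⟩ | h
    · rwa [← ι_inj hgf]
    · exact absurd h (ι_not_mem_newE f)
  have F1 : ∀ N₁ N₂, IsPM G N₁ → IsPM G N₂ → s(u, v) ∉ N₁ → s(u, v) ∉ N₂ →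
      S₀ ∩ N₁ = S₀ ∩ N₂ → N₁ = N₂ := by
    intro N₁ N₂ h₁ h₂ e₁ e₂ hint
    by_contra hnn
    apply hS'.2 (liftA N₁) (liftA N₂) (isPM_liftA h₁ e₁) (isPM_liftA h₂ e₂)
      (fun h => hnn (liftA_inj h))
    have dir : ∀ {Na Nb : Set (Sym2 V)}, S₀ ∩ Na = S₀ ∩ Nb →
        S' ∩ liftA Na ⊆ S' ∩ liftA Nb := by
      intro Na Nb hii e he
      refine ⟨he.1, ?_⟩
      rcases mem_liftA_iff.1 he.2 with ⟨f, hf, rfl⟩ | rfl | rfl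
      · have : f ∈ S₀ ∩ Na := ⟨he.1, hf⟩
        rw [hii] at this
        exact ι_mem_liftA_iff.2 this.2
      · exact a1_mem_liftA
      · exact a3_mem_liftA
    exact Set.eq_of_subset_of_subset (dir hint) (dir hint.symm)
  have F2 : ∀ N₁ N₂, IsPM G N₁ → IsPM G N₂ → s(u, v) ∈ N₁ → s(u, v) ∈ N₂ →
      S₀ ∩ N₁ = S₀ ∩ N₂ → N₁ = N₂ := by
    intro N₁ N₂ h₁ h₂ e₁ e₂ hint
    by_contra hnn
    apply hS'.2 (liftC u v N₁) (liftC u v N₂) (isPM_liftC h₁ e₁ huv.ne)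
      (isPM_liftC h₂ e₂ huv.ne) (fun h => hnn (liftC_inj e₁ e₂ h))
    have dir : ∀ {Na Nb : Set (Sym2 V)}, S₀ ∩ Na = S₀ ∩ Nb →
        S' ∩ liftC u v Na ⊆ S' ∩ liftC u v Nb := by
      intro Na Nb hii e he
      refine ⟨he.1, ?_⟩
      rcases mem_liftC_iff.1 he.2 with ⟨f, hf, rfl⟩ | rfl | rfl | rfl
      · have : f ∈ S₀ ∩ Na := ⟨he.1, hf.1⟩
        rw [hii] at this
        exact ι_mem_liftC_iff.2 ⟨this.2, hf.2⟩
      · exact a0_mem_liftC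
      · exact a2_mem_liftC
      · exact a4_mem_liftC
    exact Set.eq_of_subset_of_subset (dir hint) (dir hint.symm)
  -- a square edge in S'
  have hq : ∃ q ∈ S', q = s(Sum.inr 0, Sum.inr 1) ∨ q = s(Sum.inr 2, Sum.inr 3) ∨
      q = s(Sum.inr 1, Sum.inr 2) ∨ q = s(Sum.inr 0, Sum.inr 3) := by
    obtain ⟨e, heS, hcase⟩ := exists_diff
      (hS'.2 (liftA M) (liftB M) (isPM_liftA hM heM) (isPM_liftB hM heM) liftA_ne_liftB)
    rcases hcase with ⟨hA, hB⟩ | ⟨hB, hA⟩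
    · rcases mem_liftA_iff.1 hA with ⟨f, hf, rfl⟩ | rfl | rfl
      · exact absurd (ι_mem_liftB_iff.2 hf) hB
      · exact ⟨_, heS, Or.inl rfl⟩
      · exact ⟨_, heS, Or.inr (Or.inl rfl)⟩
    · rcases mem_liftB_iff.1 hB with ⟨f, hf, rfl⟩ | rfl | rfl
      · exact absurd (ι_mem_liftA_iff.2 hf) hA
      · exact ⟨_, heS, Or.inr (Or.inr (Or.inl rfl))⟩
      · exact ⟨_, heS, Or.inr (Or.inr (Or.inr rfl))⟩
  obtain ⟨q, hqS, hqcases⟩ := hq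
  have hqι : ∀ f : Sym2 V, ι f ≠ q := by
    rcases hqcases with rfl | rfl | rfl | rfl
    · exact fun f => ι_ne_inr_left f _ 0
    · exact fun f => ι_ne_inr_left f _ 2
    · exact fun f => ι_ne_inr_left f _ 1
    · exact fun f => ι_ne_inr_left f _ 0
  by_cases hGFS : IsGlobalForcingSet G S₀
  · have hcount := count_aux {q} (by simpa using hqS)
      (by rintro e rfl f; exact hqι f)
    rw [Set.ncard_singleton, ← hS₀def] at hcount
    have := gf_le hGFS
    omega
  · have hpair : ∃ N₁ N₂, IsPM G N₁ ∧ IsPM G N₂ ∧ N₁ ≠ N₂ ∧ S₀ ∩ N₁ = S₀ ∩ N₂ := by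
      by_contra hno
      push_neg at hno
      exact hGFS ⟨fun f hf => (hS₀E hf).1, fun N₁ N₂ h₁ h₂ hnn => hno N₁ N₂ h₁ h₂ hnn⟩
    obtain ⟨N₁, N₂, h₁, h₂, hnn, hint⟩ := hpair
    have main : ∀ N₁ N₂, IsPM G N₁ → IsPM G N₂ → s(u, v) ∉ N₁ → s(u, v) ∈ N₂ →
        S₀ ∩ N₁ = S₀ ∩ N₂ → gf G + 1 ≤ gf (addSquare G u v) := by
      intro Na Nb ha hb ea eb hii
      -- x from liftB Na vs liftC Nb
      have hx : ∃ x ∈ S', x = s(Sum.inr 0, Sum.inr 3) ∨ x = s(Sum.inl u, Sum.inr 0) ∨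
          x = s(Sum.inr 3, Sum.inl v) := by
        obtain ⟨e, heS, hcase⟩ := exists_diff
          (hS'.2 (liftB Na) (liftC u v Nb) (isPM_liftB ha ea) (isPM_liftC hb eb huv.ne)
            liftB_ne_liftC)
        rcases hcase with ⟨hB, hC⟩ | ⟨hC, hB⟩
        · rcases mem_liftB_iff.1 hB with ⟨f, hf, rfl⟩ | rfl | rfl
          · have : f ∈ S₀ ∩ Na := ⟨heS, hf⟩
            rw [hii] at this
            have hfuv : f ≠ s(u, v) := fun h => ea (h ▸ hf)
            exact absurd (ι_mem_liftC_iff.2 ⟨this.2, hfuv⟩) hC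
          · exact absurd a2_mem_liftC hC
          · exact ⟨_, heS, Or.inl rfl⟩
        · rcases mem_liftC_iff.1 hC with ⟨f, hf, rfl⟩ | rfl | rfl | rfl
          · have : f ∈ S₀ ∩ Nb := ⟨heS, hf.1⟩
            rw [← hii] at this
            exact absurd (ι_mem_liftB_iff.2 this.2) hB
          · exact ⟨_, heS, Or.inr (Or.inl rfl)⟩
          · exact absurd a2_mem_liftB hB
          · exact ⟨_, heS, Or.inr (Or.inr rfl)⟩
      obtain ⟨x, hxS, hxcases⟩ := hx
      have hxι : ∀ f : Sym2 V, ι f ≠ x := by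
        rcases hxcases with rfl | rfl | rfl
        · exact fun f => ι_ne_inr_left f _ 0
        · exact fun f => ι_ne_inr_right f _ 0
        · exact fun f => ι_ne_inr_left f _ 3
      -- y from liftA Na vs liftC Nb
      have hy : ∃ y ∈ S', y = s(Sum.inr 0, Sum.inr 1) ∨ y = s(Sum.inr 2, Sum.inr 3) ∨
          y = s(Sum.inl u, Sum.inr 0) ∨ y = s(Sum.inr 1, Sum.inr 2) ∨
          y = s(Sum.inr 3, Sum.inl v) := by
        obtain ⟨e, heS, hcase⟩ := exists_diff
          (hS'.2 (liftA Na) (liftC u v Nb) (isPM_liftA ha ea) (isPM_liftC hb eb huv.ne)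
            liftA_ne_liftC)
        rcases hcase with ⟨hA, hC⟩ | ⟨hC, hA⟩
        · rcases mem_liftA_iff.1 hA with ⟨f, hf, rfl⟩ | rfl | rfl
          · have : f ∈ S₀ ∩ Na := ⟨heS, hf⟩
            rw [hii] at this
            have hfuv : f ≠ s(u, v) := fun h => ea (h ▸ hf)
            exact absurd (ι_mem_liftC_iff.2 ⟨this.2, hfuv⟩) hC
          · exact ⟨_, heS, Or.inl rfl⟩
          · exact ⟨_, heS, Or.inr (Or.inl rfl)⟩
        · rcases mem_liftC_iff.1 hC with ⟨f, hf, rfl⟩ | rfl | rfl | rfl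
          · have : f ∈ S₀ ∩ Nb := ⟨heS, hf.1⟩
            rw [← hii] at this
            exact absurd (ι_mem_liftA_iff.2 this.2) hA
          · exact ⟨_, heS, Or.inr (Or.inr (Or.inl rfl))⟩
          · exact ⟨_, heS, Or.inr (Or.inr (Or.inr (Or.inl rfl)))⟩
          · exact ⟨_, heS, Or.inr (Or.inr (Or.inr (Or.inr rfl)))⟩
      obtain ⟨y, hyS, hycases⟩ := hy
      have hyι : ∀ f : Sym2 V, ι f ≠ y := by
        rcases hycases with rfl | rfl | rfl | rfl | rfl
        · exact fun f => ι_ne_inr_left f _ 0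
        · exact fun f => ι_ne_inr_left f _ 2
        · exact fun f => ι_ne_inr_right f _ 0
        · exact fun f => ι_ne_inr_left f _ 1
        · exact fun f => ι_ne_inr_left f _ 3
      -- two distinct non-image edges of S'
      have htwo : ∃ c₁ c₂, c₁ ∈ S' ∧ c₂ ∈ S' ∧ c₁ ≠ c₂ ∧
          (∀ f : Sym2 V, ι f ≠ c₁) ∧ (∀ f : Sym2 V, ι f ≠ c₂) := by
        rcases hxcases with rfl | rfl | rfl
        · refine ⟨_, y, hxS, hyS, ?_, hxι, hyι⟩
          rcases hycases with rfl | rfl | rfl | rfl | rfl <;> simp [Sym2.eq_iff]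
        · refine ⟨_, q, hxS, hqS, ?_, hxι, hqι⟩
          rcases hqcases with rfl | rfl | rfl | rfl <;> simp [Sym2.eq_iff]
        · refine ⟨_, q, hxS, hqS, ?_, hxι, hqι⟩
          rcases hqcases with rfl | rfl | rfl | rfl <;> simp [Sym2.eq_iff]
      obtain ⟨c₁, c₂, hc₁S, hc₂S, hcne, hc₁ι, hc₂ι⟩ := htwo
      have hcount := count_aux (S' := S') {c₁, c₂}
        (by rintro e (rfl | rfl) <;> assumption)
        (by rintro e (rfl | rfl) f <;> [exact hc₁ι f; exact hc₂ι f])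
      rw [Set.ncard_pair hcne, ← hS₀def] at hcount
      -- S₀ ∪ {uv} is a global forcing set of G
      have hGFS' : IsGlobalForcingSet G (insert s(u, v) S₀) := by
        constructor
        · rintro f (rfl | hf)
          · exact huv
          · exact (hS₀E hf).1
        · intro Ma Mb hMa hMb hab heq2
          have hS₀ab : S₀ ∩ Ma = S₀ ∩ Mb := by
            ext f
            simp only [Set.mem_inter_iff]
            constructor
            · rintro ⟨hf, hfa⟩
              have : f ∈ insert s(u, v) S₀ ∩ Ma := ⟨Set.mem_insert_of_mem _ hf, hfa⟩
              rw [heq2] at this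
              exact ⟨hf, this.2⟩
            · rintro ⟨hf, hfb⟩
              have : f ∈ insert s(u, v) S₀ ∩ Mb := ⟨Set.mem_insert_of_mem _ hf, hfb⟩
              rw [← heq2] at this
              exact ⟨hf, this.2⟩
          have huvab : s(u, v) ∈ Ma ↔ s(u, v) ∈ Mb := by
            constructor
            · intro h
              have : s(u, v) ∈ insert s(u, v) S₀ ∩ Ma := ⟨Set.mem_insert _ _, h⟩
              rw [heq2] at this
              exact this.2
            · intro h
              have : s(u, v) ∈ insert s(u, v) S₀ ∩ Mb := ⟨Set.mem_insert _ _, h⟩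
              rw [← heq2] at this
              exact this.2
          by_cases ha' : s(u, v) ∈ Ma
          · exact hab (F2 Ma Mb hMa hMb ha' (huvab.1 ha') hS₀ab)
          · exact hab (F1 Ma Mb hMa hMb ha' (fun h => ha' (huvab.2 h)) hS₀ab)
      have hle : gf G ≤ S₀.ncard + 1 :=
        le_trans (gf_le hGFS') (Set.ncard_insert_le _ _)
      omega
    by_cases e₁ : s(u, v) ∈ N₁ <;> by_cases e₂ : s(u, v) ∈ N₂
    · exact absurd (F2 N₁ N₂ h₁ h₂ e₁ e₂ hint) hnn
    · exact main N₂ N₁ h₂ h₁ e₂ e₁ hint.symm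
    · exact main N₁ N₂ h₁ h₂ e₁ e₂ hint
    · exact absurd (F1 N₁ N₂ h₁ h₂ e₁ e₂ hint) hnn

lemma Af_upper (huv : G.Adj u v) : Af (addSquare G u v) ≤ Af G + 1 := by
  refine Af_le fun M'' hM'' => ?_
  obtain ⟨N, hN, hsh⟩ := classify' huv hM''
  obtain ⟨S, hSaf, hScard⟩ := af_attain hN
  have hAfN : af G N ≤ Af G := Af_ge hN
  have hSE := hSaf.1
  have hSN : ∀ f ∈ S, f ∉ N := fun f hf hfN =>
    Set.eq_empty_iff_forall_notMem.1 hSaf.2.1 f ⟨hf, hfN⟩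
  rcases hsh with ⟨huvN, rfl | rfl⟩ | ⟨huvN, rfl⟩
  · -- type A
    by_cases huvS : s(u, v) ∈ S
    · set S' : Set (Sym2 (V ⊕ Fin 4)) :=
        ι '' (S \ {s(u, v)}) ∪ {s(Sum.inr 0, Sum.inr 3), s(Sum.inr 1, Sum.inr 2)} with hS'def
      have hdisj : ∀ e ∈ liftA (V := V) N, e ∉ S' := by
        intro e he
        rintro (⟨f, hfS, rfl⟩ | rfl | rfl)
        · exact hSN f hfS.1 (mem_of_ι_mem_liftA he)
        · exact a5_not_liftA he
        · exact a2_not_liftA he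
      have hAFS : IsAntiForcingSet (addSquare G u v) (liftA N) S' := by
        refine ⟨?_, ?_, isPM_liftA_del hN huvN hdisj, ?_⟩
        · rintro e (⟨f, hfS, rfl⟩ | rfl | rfl)
          · rw [edgeSet_addSquare]
            exact Or.inl ⟨f, ⟨hSE hfS.1, hfS.2⟩, rfl⟩
          · rw [edgeSet_addSquare]; exact Or.inr (by simp [newE])
          · rw [edgeSet_addSquare]; exact Or.inr (by simp [newE])
        · exact Set.eq_empty_iff_forall_notMem.2 fun e h => hdisj e h.2 h.1
        · intro M₂ hM₂
          obtain ⟨N', hN', hsh'⟩ := classify_del huv hM₂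
          have hM₂S' := (pm_del_facts hM₂).2
          rcases hsh' with ⟨huvN', rfl | rfl⟩ | ⟨huvN', rfl⟩
          · refine congrArg liftA (hSaf.2.2.2 N' (isPM_del_of hN' fun f hfN' hfS => ?_))
            have hfuv : f ≠ s(u, v) := fun h => huvN' (h ▸ hfN')
            exact hM₂S' (ι f) (ι_mem_liftA_iff.2 hfN') (Or.inl ⟨f, ⟨hfS, hfuv⟩, rfl⟩)
          · exact absurd (Or.inr (Or.inl rfl)) (hM₂S' _ a5_mem_liftB)
          · exact absurd (Or.inr (Or.inr rfl)) (hM₂S' _ a2_mem_liftC)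
      have hsize : S'.ncard = (S \ {s(u, v)}).ncard + 2 :=
        size_union2 _ _ _ (by simp [Sym2.eq_iff])
          (fun f => ι_ne_inr_left f _ 0) (fun f => ι_ne_inr_left f _ 1)
      have hpos : 0 < S.ncard := (Set.ncard_pos (Set.toFinite _)).2 ⟨_, huvS⟩
      have hdiff : (S \ {s(u, v)}).ncard = S.ncard - 1 :=
        Set.ncard_diff_singleton_of_mem huvS
      have := af_le hAFS
      omega
    · set S' : Set (Sym2 (V ⊕ Fin 4)) := ι '' S ∪ {s(Sum.inr 0, Sum.inr 3)} with hS'def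
      have hdisj : ∀ e ∈ liftA (V := V) N, e ∉ S' := by
        intro e he
        rintro (⟨f, hfS, rfl⟩ | rfl)
        · exact hSN f hfS (mem_of_ι_mem_liftA he)
        · exact a5_not_liftA he
      have hAFS : IsAntiForcingSet (addSquare G u v) (liftA N) S' := by
        refine ⟨?_, ?_, isPM_liftA_del hN huvN hdisj, ?_⟩
        · rintro e (⟨f, hfS, rfl⟩ | rfl)
          · rw [edgeSet_addSquare]
            exact Or.inl ⟨f, ⟨hSE hfS, fun h => huvS (h ▸ hfS)⟩, rfl⟩
          · rw [edgeSet_addSquare]; exact Or.inr (by simp [newE])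
        · exact Set.eq_empty_iff_forall_notMem.2 fun e h => hdisj e h.2 h.1
        · intro M₂ hM₂
          obtain ⟨N', hN', hsh'⟩ := classify_del huv hM₂
          have hM₂S' := (pm_del_facts hM₂).2
          rcases hsh' with ⟨huvN', rfl | rfl⟩ | ⟨huvN', rfl⟩
          · exact congrArg liftA (hSaf.2.2.2 N' (isPM_del_of hN' fun f hfN' hfS =>
              hM₂S' (ι f) (ι_mem_liftA_iff.2 hfN') (Or.inl ⟨f, hfS, rfl⟩)))
          · exact absurd (Or.inr rfl) (hM₂S' _ a5_mem_liftB)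
          · have : N' = N := hSaf.2.2.2 N' (isPM_del_of hN' fun f hfN' hfS => by
              have hfuv : f ≠ s(u, v) := fun h => huvS (h ▸ hfS)
              exact hM₂S' (ι f) (ι_mem_liftC_iff.2 ⟨hfN', hfuv⟩) (Or.inl ⟨f, hfS, rfl⟩))
            exact absurd (this ▸ huvN') huvN
      have hsize : S'.ncard = S.ncard + 1 :=
        size_union1 _ _ (fun f => ι_ne_inr_left f _ 0)
      have := af_le hAFS
      omega
  · -- type B
    by_cases huvS : s(u, v) ∈ S
    · set S' : Set (Sym2 (V ⊕ Fin 4)) :=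
        ι '' (S \ {s(u, v)}) ∪ {s(Sum.inr 0, Sum.inr 1), s(Sum.inl u, Sum.inr 0)} with hS'def
      have hdisj : ∀ e ∈ liftB (V := V) N, e ∉ S' := by
        intro e he
        rintro (⟨f, hfS, rfl⟩ | rfl | rfl)
        · exact hSN f hfS.1 (mem_of_ι_mem_liftB he)
        · exact a1_not_liftB he
        · exact a0_not_liftB he
      have hAFS : IsAntiForcingSet (addSquare G u v) (liftB N) S' := by
        refine ⟨?_, ?_, isPM_liftB_del hN huvN hdisj, ?_⟩
        · rintro e (⟨f, hfS, rfl⟩ | rfl | rfl)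
          · rw [edgeSet_addSquare]
            exact Or.inl ⟨f, ⟨hSE hfS.1, hfS.2⟩, rfl⟩
          · rw [edgeSet_addSquare]; exact Or.inr (by simp [newE])
          · rw [edgeSet_addSquare]; exact Or.inr (by simp [newE])
        · exact Set.eq_empty_iff_forall_notMem.2 fun e h => hdisj e h.2 h.1
        · intro M₂ hM₂
          obtain ⟨N', hN', hsh'⟩ := classify_del huv hM₂
          have hM₂S' := (pm_del_facts hM₂).2
          rcases hsh' with ⟨huvN', rfl | rfl⟩ | ⟨huvN', rfl⟩
          · exact absurd (Or.inr (Or.inl rfl)) (hM₂S' _ a1_mem_liftA)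
          · refine congrArg liftB (hSaf.2.2.2 N' (isPM_del_of hN' fun f hfN' hfS => ?_))
            have hfuv : f ≠ s(u, v) := fun h => huvN' (h ▸ hfN')
            exact hM₂S' (ι f) (ι_mem_liftB_iff.2 hfN') (Or.inl ⟨f, ⟨hfS, hfuv⟩, rfl⟩)
          · exact absurd (Or.inr (Or.inr rfl)) (hM₂S' _ a0_mem_liftC)
      have hsize : S'.ncard = (S \ {s(u, v)}).ncard + 2 :=
        size_union2 _ _ _ (by simp [Sym2.eq_iff])
          (fun f => ι_ne_inr_left f _ 0) (fun f => ι_ne_inr_right f _ 0)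
      have hpos : 0 < S.ncard := (Set.ncard_pos (Set.toFinite _)).2 ⟨_, huvS⟩
      have hdiff : (S \ {s(u, v)}).ncard = S.ncard - 1 :=
        Set.ncard_diff_singleton_of_mem huvS
      have := af_le hAFS
      omega
    · set S' : Set (Sym2 (V ⊕ Fin 4)) := ι '' S ∪ {s(Sum.inr 0, Sum.inr 1)} with hS'def
      have hdisj : ∀ e ∈ liftB (V := V) N, e ∉ S' := by
        intro e he
        rintro (⟨f, hfS, rfl⟩ | rfl)
        · exact hSN f hfS (mem_of_ι_mem_liftB he)
        · exact a1_not_liftB he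
      have hAFS : IsAntiForcingSet (addSquare G u v) (liftB N) S' := by
        refine ⟨?_, ?_, isPM_liftB_del hN huvN hdisj, ?_⟩
        · rintro e (⟨f, hfS, rfl⟩ | rfl)
          · rw [edgeSet_addSquare]
            exact Or.inl ⟨f, ⟨hSE hfS, fun h => huvS (h ▸ hfS)⟩, rfl⟩
          · rw [edgeSet_addSquare]; exact Or.inr (by simp [newE])
        · exact Set.eq_empty_iff_forall_notMem.2 fun e h => hdisj e h.2 h.1
        · intro M₂ hM₂
          obtain ⟨N', hN', hsh'⟩ := classify_del huv hM₂
          have hM₂S' := (pm_del_facts hM₂).2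
          rcases hsh' with ⟨huvN', rfl | rfl⟩ | ⟨huvN', rfl⟩
          · exact absurd (Or.inr rfl) (hM₂S' _ a1_mem_liftA)
          · exact congrArg liftB (hSaf.2.2.2 N' (isPM_del_of hN' fun f hfN' hfS =>
              hM₂S' (ι f) (ι_mem_liftB_iff.2 hfN') (Or.inl ⟨f, hfS, rfl⟩)))
          · have : N' = N := hSaf.2.2.2 N' (isPM_del_of hN' fun f hfN' hfS => by
              have hfuv : f ≠ s(u, v) := fun h => huvS (h ▸ hfS)
              exact hM₂S' (ι f) (ι_mem_liftC_iff.2 ⟨hfN', hfuv⟩) (Or.inl ⟨f, hfS, rfl⟩))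
            exact absurd (this ▸ huvN') huvN
      have hsize : S'.ncard = S.ncard + 1 :=
        size_union1 _ _ (fun f => ι_ne_inr_left f _ 0)
      have := af_le hAFS
      omega
  · -- type C
    have huvS : s(u, v) ∉ S := fun h => hSN _ h huvN
    set S' : Set (Sym2 (V ⊕ Fin 4)) := ι '' S ∪ {s(Sum.inr 0, Sum.inr 3)} with hS'def
    have hdisj : ∀ e ∈ liftC u v N, e ∉ S' := by
      intro e he
      rintro (⟨f, hfS, rfl⟩ | rfl)
      · exact hSN f hfS (mem_of_ι_mem_liftC he).1
      · exact a5_not_liftC he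
    have hAFS : IsAntiForcingSet (addSquare G u v) (liftC u v N) S' := by
      refine ⟨?_, ?_, isPM_liftC_del hN huvN huv.ne hdisj, ?_⟩
      · rintro e (⟨f, hfS, rfl⟩ | rfl)
        · rw [edgeSet_addSquare]
          exact Or.inl ⟨f, ⟨hSE hfS, fun h => huvS (h ▸ hfS)⟩, rfl⟩
        · rw [edgeSet_addSquare]; exact Or.inr (by simp [newE])
      · exact Set.eq_empty_iff_forall_notMem.2 fun e h => hdisj e h.2 h.1
      · intro M₂ hM₂
        obtain ⟨N', hN', hsh'⟩ := classify_del huv hM₂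
        have hM₂S' := (pm_del_facts hM₂).2
        rcases hsh' with ⟨huvN', rfl | rfl⟩ | ⟨huvN', rfl⟩
        · have : N' = N := hSaf.2.2.2 N' (isPM_del_of hN' fun f hfN' hfS =>
            hM₂S' (ι f) (ι_mem_liftA_iff.2 hfN') (Or.inl ⟨f, hfS, rfl⟩))
          subst this
          exact absurd huvN huvN'
        · exact absurd (Or.inr rfl) (hM₂S' _ a5_mem_liftB)
        · refine congrArg (liftC u v) (hSaf.2.2.2 N' (isPM_del_of hN' fun f hfN' hfS => by
            have hfuv : f ≠ s(u, v) := fun h => huvS (h ▸ hfS)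
            exact hM₂S' (ι f) (ι_mem_liftC_iff.2 ⟨hfN', hfuv⟩) (Or.inl ⟨f, hfS, rfl⟩)))
    have hsize : S'.ncard = S.ncard + 1 :=
      size_union1 _ _ (fun f => ι_ne_inr_left f _ 0)
    have := af_le hAFS
    omega

lemma Af_lower (huv : G.Adj u v) (hM : IsPM G M) (heM : s(u, v) ∉ M) :
    af G M + 1 ≤ Af (addSquare G u v) := by
  have hBM : IsPM (addSquare G u v) (liftB M) := isPM_liftB hM heM
  refine le_trans ?_ (Af_ge hBM)
  refine le_af hBM fun S' hS' => ?_
  have hS'E := hS'.1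
  have hS'B : ∀ e ∈ S', e ∉ liftB M := fun e he hm =>
    Set.eq_empty_iff_forall_notMem.1 hS'.2.1 e ⟨he, hm⟩
  set S₀ : Set (Sym2 V) := {f | ι f ∈ S'} with hS₀def
  have hS₀E : S₀ ⊆ G.edgeSet \ {s(u, v)} := by
    intro f hf
    have := hS'E hf
    rw [edgeSet_addSquare] at this
    rcases this with ⟨g, hg, hgf⟩ | h
    · rwa [← ι_inj hgf]
    · exact absurd h (ι_not_mem_newE f)
  have hS₀M : ∀ f ∈ S₀, f ∉ M := fun f hf hfM => hS'B (ι f) hf (ι_mem_liftB_iff.2 hfM)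
  have ha2 : s(Sum.inr 1, Sum.inr 2) ∉ S' := fun h => hS'B _ h a2_mem_liftB
  have ha5 : s(Sum.inr 0, Sum.inr 3) ∉ S' := fun h => hS'B _ h a5_mem_liftB
  have hq : ∃ q ∈ S', q = s(Sum.inr 0, Sum.inr 1) ∨ q = s(Sum.inr 2, Sum.inr 3) := by
    by_contra hno
    push_neg at hno
    have hdisjA : ∀ e ∈ liftA (V := V) M, e ∉ S' := by
      intro e he hS
      rcases mem_liftA_iff.1 he with ⟨f, hf, rfl⟩ | rfl | rfl
      · exact hS₀M f hS hf
      · exact (hno _ hS).1 rfl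
      · exact (hno _ hS).2 rfl
    exact liftA_ne_liftB (hS'.2.2.2 (liftA M) (isPM_liftA_del hM heM hdisjA))
  obtain ⟨q, hqS, hqcase⟩ := hq
  have hqι : ∀ f : Sym2 V, ι f ≠ q := by
    rcases hqcase with rfl | rfl
    · exact fun f => ι_ne_inr_left f _ 0
    · exact fun f => ι_ne_inr_left f _ 2
  by_cases hex : ∃ N', IsPM G N' ∧ s(u, v) ∈ N' ∧ ∀ f ∈ N' \ {s(u, v)}, ι f ∉ S'
  · obtain ⟨N', hN', huvN', hNd⟩ := hex
    have hx : ∃ x ∈ S', x = s(Sum.inl u, Sum.inr 0) ∨ x = s(Sum.inr 3, Sum.inl v) := by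
      by_contra hno
      push_neg at hno
      have hdisjC : ∀ e ∈ liftC u v N', e ∉ S' := by
        intro e he hS
        rcases mem_liftC_iff.1 he with ⟨f, hf, rfl⟩ | rfl | rfl | rfl
        · exact hNd f hf hS
        · exact (hno _ hS).1 rfl
        · exact ha2 hS
        · exact (hno _ hS).2 rfl
      exact liftB_ne_liftC
        (hS'.2.2.2 (liftC u v N') (isPM_liftC_del hN' huvN' huv.ne hdisjC)).symm
    obtain ⟨x, hxS, hxcase⟩ := hx
    have hxι : ∀ f : Sym2 V, ι f ≠ x := by
      rcases hxcase with rfl | rfl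
      · exact fun f => ι_ne_inr_right f _ 0
      · exact fun f => ι_ne_inr_left f _ 3
    have hqx : q ≠ x := by
      rcases hqcase with rfl | rfl <;> rcases hxcase with rfl | rfl <;> simp [Sym2.eq_iff]
    have hcount := count_aux (S' := S') {q, x}
      (by rintro e (rfl | rfl) <;> assumption)
      (by rintro e (rfl | rfl) f <;> [exact hqι f; exact hxι f])
    rw [Set.ncard_pair hqx, ← hS₀def] at hcount
    have hAFS : IsAntiForcingSet G M (insert s(u, v) S₀) := by
      refine ⟨?_, ?_, ?_, ?_⟩
      · rintro f (rfl | hf)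
        · exact huv
        · exact (hS₀E hf).1
      · refine Set.eq_empty_iff_forall_notMem.2 fun f hf => ?_
        rcases hf.1 with rfl | hf0
        · exact heM hf.2
        · exact hS₀M f hf0 hf.2
      · refine isPM_del_of hM fun f hfM => ?_
        rintro (rfl | hf0)
        · exact heM hfM
        · exact hS₀M f hf0 hfM
      · intro N₂ hN₂
        have hN₂G : IsPM G N₂ := ⟨(pm_del_facts hN₂).1, hN₂.2⟩
        have hN₂S := (pm_del_facts hN₂).2
        have huvN₂ : s(u, v) ∉ N₂ := fun h => hN₂S _ h (Set.mem_insert _ _)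
        have hN₂S₀ : ∀ f ∈ N₂, f ∉ S₀ := fun f hf hf0 =>
          hN₂S f hf (Set.mem_insert_of_mem _ hf0)
        have hdisjB : ∀ e ∈ liftB (V := V) N₂, e ∉ S' := by
          intro e he hS
          rcases mem_liftB_iff.1 he with ⟨f, hf, rfl⟩ | rfl | rfl
          · exact hN₂S₀ f hf hS
          · exact ha2 hS
          · exact ha5 hS
        exact liftB_inj (hS'.2.2.2 (liftB N₂) (isPM_liftB_del hN₂G huvN₂ hdisjB))
    have h1 := af_le hAFS
    have h2 : (insert s(u, v) S₀).ncard ≤ S₀.ncard + 1 := Set.ncard_insert_le _ _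
    omega
  · push_neg at hex
    have hcount := count_aux (S' := S') {q}
      (by rintro e rfl; exact hqS)
      (by rintro e rfl f; exact hqι f)
    rw [Set.ncard_singleton, ← hS₀def] at hcount
    have hAFS : IsAntiForcingSet G M S₀ := by
      refine ⟨fun f hf => (hS₀E hf).1, ?_, isPM_del_of hM (fun f hfM hf0 => hS₀M f hf0 hfM), ?_⟩
      · exact Set.eq_empty_iff_forall_notMem.2 fun f hf => hS₀M f hf.1 hf.2
      · intro N₂ hN₂
        have hN₂G : IsPM G N₂ := ⟨(pm_del_facts hN₂).1, hN₂.2⟩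
        have hN₂S₀ := (pm_del_facts hN₂).2
        have huvN₂ : s(u, v) ∉ N₂ := by
          intro h
          obtain ⟨f, hf, hfS⟩ := hex N₂ hN₂G h
          exact hN₂S₀ f hf.1 hfS
        have hdisjB : ∀ e ∈ liftB (V := V) N₂, e ∉ S' := by
          intro e he hS
          rcases mem_liftB_iff.1 he with ⟨f, hf, rfl⟩ | rfl | rfl
          · exact hN₂S₀ f hf hS
          · exact ha2 hS
          · exact ha5 hS
        exact liftB_inj (hS'.2.2.2 (liftB N₂) (isPM_liftB_del hN₂G huvN₂ hdisjB))
    have h1 := af_le hAFS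
    omega

end Main

end ASq

/-- Let `M` be a perfect matching of a connected graph `G` with `af(G,M) = Af(G)` and
let `e = uv` be an edge of `G` not in `M`. Then `gf(G_e) = gf(G) + 1` and
`Af(G_e) = Af(G) + 1`. -/
theorem statement_9 {V : Type*} [Fintype V] (G : SimpleGraph V) (M : Set (Sym2 V))
    (hconn : G.Connected) (hM : IsPM G M) (hmax : af G M = Af G)
    (u v : V) (huv : G.Adj u v) (heM : s(u, v) ∉ M) :
    gf (addSquare G u v) = gf G + 1 ∧ Af (addSquare G u v) = Af G + 1 := by
  constructor
  · exact le_antisymm (ASq.gf_upper huv) (ASq.gf_lower huv hM heM)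
  · refine le_antisymm (ASq.Af_upper huv) ?_
    have h := ASq.Af_lower huv hM heM
    omega
end

section
/- Let M be a perfect matching of a connected graph G with af(G,M) = Af(G), and let e = uv be an edge of G not in M. Let G_e be the graph obtained from G by deleting the edge e, adding four new vertices w₁, w₂, w₃, w₄, and adding the edges uw₁, w₁w₂, w₂w₃, w₃w₄, w₄v and w₁w₄. Then M_e = M ∪ {w₁w₄, w₂w₃} is a perfect matching of G_e and Af(G_e) = af(G_e, M_e). -/
namespace AS

variable {V : Type*}

def sq (u v : V) : Set (Sym2 (V ⊕ Fin 4)) :=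
  {s(Sum.inl u, Sum.inr 0), s(Sum.inr 0, Sum.inr 1), s(Sum.inr 1, Sum.inr 2),
   s(Sum.inr 2, Sum.inr 3), s(Sum.inr 3, Sum.inl v), s(Sum.inr 0, Sum.inr 3)}

lemma edgeSet_addSquare (G : SimpleGraph V) (u v : V) :
    (addSquare G u v).edgeSet =
      (Sym2.map Sum.inl '' (G.edgeSet \ {s(u, v)})) ∪ sq u v := by
  rw [addSquare, SimpleGraph.edgeSet_fromEdgeSet]
  ext e
  simp only [Set.mem_diff, Set.mem_setOf_eq]
  constructor
  · rintro ⟨h, -⟩; exact h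
  · intro he
    refine ⟨he, ?_⟩
    intro hd
    rcases he with ⟨f, ⟨hf, -⟩, rfl⟩ | h
    · induction f using Sym2.ind with
      | _ a b =>
        rw [Sym2.map_pair_eq, Sym2.mem_diagSet, Sym2.mk_isDiag_iff] at hd
        exact (G.ne_of_adj hf) (Sum.inl_injective hd)
    · rcases h with h|h|h|h|h|h <;> (subst h; simp [Sym2.mk_isDiag_iff] at hd)

lemma map_mem_addSquare {G : SimpleGraph V} {u v : V} {f : Sym2 V} :
    Sym2.map Sum.inl f ∈ (addSquare G u v).edgeSet ↔ f ∈ G.edgeSet ∧ f ≠ s(u, v) := by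
  rw [edgeSet_addSquare]
  constructor
  · rintro (⟨g, ⟨hg, hg'⟩, hEq⟩ | h)
    · obtain rfl := Sym2.map.injective Sum.inl_injective hEq.symm
      exact ⟨hg, hg'⟩
    · exfalso
      induction f using Sym2.ind with
      | _ a b =>
        rw [Sym2.map_pair_eq] at h
        rcases h with h|h|h|h|h|h <;> simp [Sym2.eq_iff] at h
  · rintro ⟨h1, h2⟩
    exact Or.inl ⟨f, ⟨h1, h2⟩, rfl⟩

lemma mem_addSquare_iff {G : SimpleGraph V} {u v : V} {e : Sym2 (V ⊕ Fin 4)} :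
    e ∈ (addSquare G u v).edgeSet ↔
      (∃ f, f ∈ G.edgeSet ∧ f ≠ s(u, v) ∧ e = Sym2.map Sum.inl f) ∨ e ∈ sq u v := by
  rw [edgeSet_addSquare]
  constructor
  · rintro (⟨f, ⟨h1, h2⟩, rfl⟩ | h)
    · exact Or.inl ⟨f, h1, h2, rfl⟩
    · exact Or.inr h
  · rintro (⟨f, h1, h2, rfl⟩ | h)
    · exact Or.inl ⟨f, ⟨h1, h2⟩, rfl⟩
    · exact Or.inr h

lemma inr_not_mem_map {f : Sym2 V} {i : Fin 4} :
    (Sum.inr i : V ⊕ Fin 4) ∉ Sym2.map Sum.inl f := by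
  induction f using Sym2.ind with
  | _ a b => simp [Sym2.map_pair_eq]

lemma inl_mem_map {f : Sym2 V} {a : V} :
    (Sum.inl a : V ⊕ Fin 4) ∈ Sym2.map Sum.inl f ↔ a ∈ f := by
  induction f using Sym2.ind with
  | _ x y => simp [Sym2.map_pair_eq, Sym2.mem_iff]

lemma sq_mem_edgeSet {G : SimpleGraph V} {u v : V}
    {e : Sym2 (V ⊕ Fin 4)} (he : e ∈ sq u v) : e ∈ (addSquare G u v).edgeSet :=
  mem_addSquare_iff.2 (Or.inr he)

/-- Type A push: `P ∪ {w₁w₄, w₂w₃}`. -/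
lemma isPM_typeA {G : SimpleGraph V} {u v : V} {P : Set (Sym2 V)}
    {S : Set (Sym2 (V ⊕ Fin 4))} (hP : IsPM G P) (huvP : s(u, v) ∉ P)
    (hS : ∀ f ∈ P, Sym2.map Sum.inl f ∉ S)
    (h03 : s(Sum.inr 0, Sum.inr 3) ∉ S) (h12 : s(Sum.inr 1, Sum.inr 2) ∉ S) :
    IsPM ((addSquare G u v).deleteEdges S)
      (Sym2.map Sum.inl '' P ∪ {s(Sum.inr 0, Sum.inr 3), s(Sum.inr 1, Sum.inr 2)}) := by
  constructor
  · rw [SimpleGraph.edgeSet_deleteEdges]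
    rintro e (⟨f, hf, rfl⟩ | he)
    · exact ⟨map_mem_addSquare.2 ⟨hP.1 hf, fun h => huvP (h ▸ hf)⟩, hS f hf⟩
    · rcases he with rfl | rfl
      · exact ⟨sq_mem_edgeSet (by simp [sq]), h03⟩
      · exact ⟨sq_mem_edgeSet (by simp [sq]), h12⟩
  · rintro (w | i)
    · obtain ⟨f, ⟨hfP, hwf⟩, hqu⟩ := hP.2 w
      refine ⟨Sym2.map Sum.inl f, ⟨Or.inl ⟨f, hfP, rfl⟩, inl_mem_map.2 hwf⟩, ?_⟩
      rintro e' ⟨(⟨g, hg, rfl⟩ | he'), hw⟩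
      · rw [hqu g ⟨hg, inl_mem_map.1 hw⟩]
      · rcases he' with rfl | rfl <;> simp [Sym2.mem_iff] at hw
    · fin_cases i
      · refine ⟨s(Sum.inr 0, Sum.inr 3), ⟨Or.inr (by simp), by simp⟩, ?_⟩
        rintro e' ⟨(⟨g, hg, rfl⟩ | he'), hw⟩
        · exact absurd hw inr_not_mem_map
        · rcases he' with rfl | rfl
          · rfl
          · simp [Sym2.mem_iff] at hw
      · refine ⟨s(Sum.inr 1, Sum.inr 2), ⟨Or.inr (by simp), by simp⟩, ?_⟩
        rintro e' ⟨(⟨g, hg, rfl⟩ | he'), hw⟩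
        · exact absurd hw inr_not_mem_map
        · rcases he' with rfl | rfl
          · simp [Sym2.mem_iff] at hw
          · rfl
      · refine ⟨s(Sum.inr 1, Sum.inr 2), ⟨Or.inr (by simp), by simp⟩, ?_⟩
        rintro e' ⟨(⟨g, hg, rfl⟩ | he'), hw⟩
        · exact absurd hw inr_not_mem_map
        · rcases he' with rfl | rfl
          · simp [Sym2.mem_iff] at hw
          · rfl
      · refine ⟨s(Sum.inr 0, Sum.inr 3), ⟨Or.inr (by simp), by simp⟩, ?_⟩
        rintro e' ⟨(⟨g, hg, rfl⟩ | he'), hw⟩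
        · exact absurd hw inr_not_mem_map
        · rcases he' with rfl | rfl
          · rfl
          · simp [Sym2.mem_iff] at hw



/-- Type B push: `P ∪ {w₁w₂, w₃w₄}`. -/
lemma isPM_typeB {G : SimpleGraph V} {u v : V} {P : Set (Sym2 V)}
    {S : Set (Sym2 (V ⊕ Fin 4))} (hP : IsPM G P) (huvP : s(u, v) ∉ P)
    (hS : ∀ f ∈ P, Sym2.map Sum.inl f ∉ S)
    (h01 : s(Sum.inr 0, Sum.inr 1) ∉ S) (h23 : s(Sum.inr 2, Sum.inr 3) ∉ S) :
    IsPM ((addSquare G u v).deleteEdges S)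
      (Sym2.map Sum.inl '' P ∪ {s(Sum.inr 0, Sum.inr 1), s(Sum.inr 2, Sum.inr 3)}) := by
  constructor
  · rw [SimpleGraph.edgeSet_deleteEdges]
    rintro e (⟨f, hf, rfl⟩ | he)
    · exact ⟨map_mem_addSquare.2 ⟨hP.1 hf, fun h => huvP (h ▸ hf)⟩, hS f hf⟩
    · rcases he with rfl | rfl
      · exact ⟨sq_mem_edgeSet (by simp [sq]), h01⟩
      · exact ⟨sq_mem_edgeSet (by simp [sq]), h23⟩
  · rintro (w | i)
    · obtain ⟨f, ⟨hfP, hwf⟩, hqu⟩ := hP.2 w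
      refine ⟨Sym2.map Sum.inl f, ⟨Or.inl ⟨f, hfP, rfl⟩, inl_mem_map.2 hwf⟩, ?_⟩
      rintro e' ⟨(⟨g, hg, rfl⟩ | he'), hw⟩
      · rw [hqu g ⟨hg, inl_mem_map.1 hw⟩]
      · rcases he' with rfl | rfl <;> simp [Sym2.mem_iff] at hw
    · fin_cases i <;>
      [ (refine ⟨s(Sum.inr 0, Sum.inr 1), ⟨Or.inr (by simp), by simp⟩, ?_⟩);
        (refine ⟨s(Sum.inr 0, Sum.inr 1), ⟨Or.inr (by simp), by simp⟩, ?_⟩);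
        (refine ⟨s(Sum.inr 2, Sum.inr 3), ⟨Or.inr (by simp), by simp⟩, ?_⟩);
        (refine ⟨s(Sum.inr 2, Sum.inr 3), ⟨Or.inr (by simp), by simp⟩, ?_⟩)] <;>
      · rintro e' ⟨(⟨g, hg, rfl⟩ | he'), hw⟩
        · exact absurd hw inr_not_mem_map
        · rcases he' with rfl | rfl <;> first | rfl | simp [Sym2.mem_iff] at hw

/-- Type C push: `P ∪ {uw₁, w₂w₃, w₄v}` where `P ∪ {uv}` is a PM of `G`. -/
lemma isPM_typeC {G : SimpleGraph V} {u v : V} (huv : G.Adj u v) {P : Set (Sym2 V)}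
    {S : Set (Sym2 (V ⊕ Fin 4))} (hP : IsPM G (P ∪ {s(u, v)})) (huvP : s(u, v) ∉ P)
    (hS : ∀ f ∈ P, Sym2.map Sum.inl f ∉ S)
    (hu0 : s(Sum.inl u, Sum.inr 0) ∉ S) (h12 : s(Sum.inr 1, Sum.inr 2) ∉ S)
    (h3v : s(Sum.inr 3, Sum.inl v) ∉ S) :
    IsPM ((addSquare G u v).deleteEdges S)
      (Sym2.map Sum.inl '' P ∪
        {s(Sum.inl u, Sum.inr 0), s(Sum.inr 1, Sum.inr 2), s(Sum.inr 3, Sum.inl v)}) := by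
  have hPsub : P ⊆ G.edgeSet := fun f hf => hP.1 (Or.inl hf)
  have hne : u ≠ v := G.ne_of_adj huv
  -- no edge of P contains u or v
  have hu : ∀ f ∈ P, u ∉ f := by
    intro f hf hu
    obtain ⟨e, -, hqu⟩ := hP.2 u
    have h1 := hqu f ⟨Or.inl hf, hu⟩
    have h2 := hqu s(u, v) ⟨Or.inr rfl, by simp [Sym2.mem_iff]⟩
    exact huvP ((h1.trans h2.symm) ▸ hf)
  have hv : ∀ f ∈ P, v ∉ f := by
    intro f hf hv
    obtain ⟨e, -, hqu⟩ := hP.2 v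
    have h1 := hqu f ⟨Or.inl hf, hv⟩
    have h2 := hqu s(u, v) ⟨Or.inr rfl, by simp [Sym2.mem_iff]⟩
    exact huvP ((h1.trans h2.symm) ▸ hf)
  constructor
  · rw [SimpleGraph.edgeSet_deleteEdges]
    rintro e (⟨f, hf, rfl⟩ | he)
    · exact ⟨map_mem_addSquare.2 ⟨hPsub hf, fun h => huvP (h ▸ hf)⟩, hS f hf⟩
    · rcases he with rfl | rfl | rfl
      · exact ⟨sq_mem_edgeSet (by simp [sq]), hu0⟩
      · exact ⟨sq_mem_edgeSet (by simp [sq]), h12⟩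
      · exact ⟨sq_mem_edgeSet (by simp [sq]), h3v⟩
  · rintro (w | i)
    · obtain ⟨f, ⟨hfP, hwf⟩, hqu⟩ := hP.2 w
      rcases hfP with hfP | hfuv
      · refine ⟨Sym2.map Sum.inl f, ⟨Or.inl ⟨f, hfP, rfl⟩, inl_mem_map.2 hwf⟩, ?_⟩
        rintro e' ⟨(⟨g, hg, rfl⟩ | he'), hw⟩
        · rw [hqu g ⟨Or.inl hg, inl_mem_map.1 hw⟩]
        · rcases he' with rfl | rfl | rfl
          · -- e' = uw1, so w = u, but u ∉ f for f ∈ P... f contains u: contra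
            have : w = u := by simpa [Sym2.mem_iff] using hw
            exact absurd (this ▸ hwf) (hu f hfP)
          · simp [Sym2.mem_iff] at hw
          · have : w = v := by simpa [Sym2.mem_iff] using hw
            exact absurd (this ▸ hwf) (hv f hfP)
      · -- f = s(u,v), so w = u or w = v
        rw [Set.mem_singleton_iff] at hfuv
        subst hfuv
        rw [Sym2.mem_iff] at hwf
        rcases hwf with rfl | rfl
        · refine ⟨s(Sum.inl w, Sum.inr 0), ⟨Or.inr (by simp), by simp⟩, ?_⟩
          rintro e' ⟨(⟨g, hg, rfl⟩ | he'), hw⟩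
          · exact absurd (inl_mem_map.1 hw) (hu g hg)
          · rcases he' with rfl | rfl | rfl
            · rfl
            · simp [Sym2.mem_iff] at hw
            · have : w = v := by simpa [Sym2.mem_iff] using hw
              exact absurd this hne
        · refine ⟨s(Sum.inr 3, Sum.inl w), ⟨Or.inr (by simp), by simp⟩, ?_⟩
          rintro e' ⟨(⟨g, hg, rfl⟩ | he'), hw⟩
          · exact absurd (inl_mem_map.1 hw) (hv g hg)
          · rcases he' with rfl | rfl | rfl
            · have : w = u := by simpa [Sym2.mem_iff] using hw
              exact absurd this.symm hne
            · simp [Sym2.mem_iff] at hw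
            · rfl
    · fin_cases i <;>
      [ (refine ⟨s(Sum.inl u, Sum.inr 0), ⟨Or.inr (by simp), by simp⟩, ?_⟩);
        (refine ⟨s(Sum.inr 1, Sum.inr 2), ⟨Or.inr (by simp), by simp⟩, ?_⟩);
        (refine ⟨s(Sum.inr 1, Sum.inr 2), ⟨Or.inr (by simp), by simp⟩, ?_⟩);
        (refine ⟨s(Sum.inr 3, Sum.inl v), ⟨Or.inr (by simp), by simp⟩, ?_⟩)] <;>
      · rintro e' ⟨(⟨g, hg, rfl⟩ | he'), hw⟩
        · exact absurd hw inr_not_mem_map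
        · rcases he' with rfl | rfl | rfl <;> first | rfl | simp [Sym2.mem_iff] at hw

/-- Structure of perfect matchings of subgraphs of `addSquare G u v`. -/
lemma pm_structure {G : SimpleGraph V} {u v : V} (huv : G.Adj u v)
    {S N : Set (Sym2 (V ⊕ Fin 4))}
    (hN : IsPM ((addSquare G u v).deleteEdges S) N) :
    ∃ P : Set (Sym2 V), (∀ f, f ∈ P ↔ Sym2.map Sum.inl f ∈ N) ∧ s(u, v) ∉ P ∧
      ((N = Sym2.map Sum.inl '' P ∪ {s(Sum.inr 0, Sum.inr 3), s(Sum.inr 1, Sum.inr 2)} ∧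
          IsPM G P) ∨
       (N = Sym2.map Sum.inl '' P ∪ {s(Sum.inr 0, Sum.inr 1), s(Sum.inr 2, Sum.inr 3)} ∧
          IsPM G P) ∨
       (N = Sym2.map Sum.inl '' P ∪
            {s(Sum.inl u, Sum.inr 0), s(Sum.inr 1, Sum.inr 2), s(Sum.inr 3, Sum.inl v)} ∧
          IsPM G (P ∪ {s(u, v)}))) := by
  classical
  have hNsub : N ⊆ (addSquare G u v).edgeSet \ S := by
    rw [← SimpleGraph.edgeSet_deleteEdges]; exact hN.1
  set P : Set (Sym2 V) := {f | Sym2.map Sum.inl f ∈ N} with hPdef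
  have hPmem : ∀ f, f ∈ P ↔ Sym2.map Sum.inl f ∈ N := fun f => Iff.rfl
  have hPsub : P ⊆ G.edgeSet := by
    intro f hf
    exact (map_mem_addSquare.1 (hNsub hf).1).1
  have hPuv : s(u, v) ∉ P := by
    intro hf
    exact (map_mem_addSquare.1 (hNsub hf).1).2 rfl
  have huniq : ∀ (x : V ⊕ Fin 4) e₁ e₂, e₁ ∈ N → x ∈ e₁ → e₂ ∈ N → x ∈ e₂ → e₁ = e₂ := by
    intro x e₁ e₂ h1 hx1 h2 hx2
    obtain ⟨e, -, hq⟩ := hN.2 x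
    rw [hq e₁ ⟨h1, hx1⟩, hq e₂ ⟨h2, hx2⟩]
  have edgeAt : ∀ i : Fin 4, ∃ e ∈ N, (Sum.inr i : V ⊕ Fin 4) ∈ e ∧ e ∈ sq u v := by
    intro i
    obtain ⟨e, ⟨heN, hie⟩, -⟩ := hN.2 (Sum.inr i)
    rcases mem_addSquare_iff.1 ((hNsub heN).1) with ⟨f, -, -, rfl⟩ | hsq
    · exact absurd hie inr_not_mem_map
    · exact ⟨e, heN, hie, hsq⟩
  -- P is a PM of G provided N avoids uw₁ and w₄v
  have mkP : s(Sum.inl u, Sum.inr 0) ∉ N → s(Sum.inr 3, Sum.inl v) ∉ N → IsPM G P := by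
    intro hN0 hN3
    refine ⟨hPsub, fun w => ?_⟩
    obtain ⟨e, ⟨heN, hwe⟩, -⟩ := hN.2 (Sum.inl w)
    rcases mem_addSquare_iff.1 ((hNsub heN).1) with ⟨f, -, -, rfl⟩ | hsq
    · refine ⟨f, ⟨heN, inl_mem_map.1 hwe⟩, ?_⟩
      intro g ⟨hgP, hwg⟩
      exact Sym2.map.injective Sum.inl_injective
        (huniq (Sum.inl w) _ _ hgP (inl_mem_map.2 hwg) heN hwe)
    · exfalso
      simp only [sq, Set.mem_insert_iff, Set.mem_singleton_iff] at hsq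
      rcases hsq with rfl|rfl|rfl|rfl|rfl|rfl
      · exact hN0 heN
      · simp [Sym2.mem_iff] at hwe
      · simp [Sym2.mem_iff] at hwe
      · simp [Sym2.mem_iff] at hwe
      · exact hN3 heN
      · simp [Sym2.mem_iff] at hwe
  refine ⟨P, hPmem, hPuv, ?_⟩
  obtain ⟨e2, he2N, h1e2, hsq2⟩ := edgeAt 1
  simp only [sq, Set.mem_insert_iff, Set.mem_singleton_iff] at hsq2
  have hsq2' : e2 = s(Sum.inr 0, Sum.inr 1) ∨ e2 = s(Sum.inr 1, Sum.inr 2) := by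
    rcases hsq2 with rfl|rfl|rfl|rfl|rfl|rfl
    · simp [Sym2.mem_iff] at h1e2
    · exact Or.inl rfl
    · exact Or.inr rfl
    · simp [Sym2.mem_iff] at h1e2
    · simp [Sym2.mem_iff] at h1e2
    · simp [Sym2.mem_iff] at h1e2
  clear hsq2
  rcases hsq2' with rfl | rfl
  · -- Case B : w₁w₂ ∈ N
    obtain ⟨e3, he3N, h2e3, hsq3⟩ := edgeAt 2
    simp only [sq, Set.mem_insert_iff, Set.mem_singleton_iff] at hsq3
    have he3 : e3 = s(Sum.inr 2, Sum.inr 3) := by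
      rcases hsq3 with rfl|rfl|rfl|rfl|rfl|rfl
      · simp [Sym2.mem_iff] at h2e3
      · simp [Sym2.mem_iff] at h2e3
      · exact absurd (huniq (Sum.inr 1) _ _ he3N (by simp) he2N (by simp))
          (by simp [Sym2.eq_iff])
      · rfl
      · simp [Sym2.mem_iff] at h2e3
      · simp [Sym2.mem_iff] at h2e3
    subst he3
    have hN0 : s(Sum.inl u, Sum.inr 0) ∉ N := fun h =>
      absurd (huniq (Sum.inr 0) _ _ h (by simp) he2N (by simp)) (by simp [Sym2.eq_iff])
    have hN03 : s(Sum.inr 0, Sum.inr 3) ∉ N := fun h =>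
      absurd (huniq (Sum.inr 0) _ _ h (by simp) he2N (by simp)) (by simp [Sym2.eq_iff])
    have hN12 : s(Sum.inr 1, Sum.inr 2) ∉ N := fun h =>
      absurd (huniq (Sum.inr 1) _ _ h (by simp) he2N (by simp)) (by simp [Sym2.eq_iff])
    have hN3 : s(Sum.inr 3, Sum.inl v) ∉ N := fun h =>
      absurd (huniq (Sum.inr 3) _ _ h (by simp) he3N (by simp)) (by simp [Sym2.eq_iff])
    refine Or.inr (Or.inl ⟨?_, mkP hN0 hN3⟩)
    ext e
    constructor
    · intro he
      rcases mem_addSquare_iff.1 (hNsub he).1 with ⟨f, -, -, rfl⟩ | hsq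
      · exact Or.inl ⟨f, he, rfl⟩
      · simp only [sq, Set.mem_insert_iff, Set.mem_singleton_iff] at hsq
        rcases hsq with rfl|rfl|rfl|rfl|rfl|rfl
        · exact absurd he hN0
        · exact Or.inr (by simp)
        · exact absurd he hN12
        · exact Or.inr (by simp)
        · exact absurd he hN3
        · exact absurd he hN03
    · rintro (⟨f, hf, rfl⟩ | he)
      · exact hf
      · rcases he with rfl | rfl
        · exact he2N
        · exact he3N
  · -- w₂w₃ ∈ N
    obtain ⟨e0, he0N, h0e0, hsq0⟩ := edgeAt 0
    simp only [sq, Set.mem_insert_iff, Set.mem_singleton_iff] at hsq0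
    have hsq0' : e0 = s(Sum.inl u, Sum.inr 0) ∨ e0 = s(Sum.inr 0, Sum.inr 3) := by
      rcases hsq0 with rfl|rfl|rfl|rfl|rfl|rfl
      · exact Or.inl rfl
      · exact absurd (huniq (Sum.inr 1) _ _ he0N (by simp) he2N (by simp))
          (by simp [Sym2.eq_iff])
      · simp [Sym2.mem_iff] at h0e0
      · simp [Sym2.mem_iff] at h0e0
      · simp [Sym2.mem_iff] at h0e0
      · exact Or.inr rfl
    clear hsq0
    have hN01 : s(Sum.inr 0, Sum.inr 1) ∉ N := fun h =>
      absurd (huniq (Sum.inr 1) _ _ h (by simp) he2N (by simp)) (by simp [Sym2.eq_iff])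
    have hN23 : s(Sum.inr 2, Sum.inr 3) ∉ N := fun h =>
      absurd (huniq (Sum.inr 2) _ _ h (by simp) he2N (by simp)) (by simp [Sym2.eq_iff])
    rcases hsq0' with rfl | rfl
    · -- Case C : uw₁ ∈ N
      obtain ⟨e3, he3N, h3e3, hsq3⟩ := edgeAt 3
      simp only [sq, Set.mem_insert_iff, Set.mem_singleton_iff] at hsq3
      have he3 : e3 = s(Sum.inr 3, Sum.inl v) := by
        rcases hsq3 with rfl|rfl|rfl|rfl|rfl|rfl
        · simp [Sym2.mem_iff] at h3e3
        · simp [Sym2.mem_iff] at h3e3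
        · simp [Sym2.mem_iff] at h3e3
        · exact absurd (huniq (Sum.inr 2) _ _ he3N (by simp) he2N (by simp))
            (by simp [Sym2.eq_iff])
        · rfl
        · exact absurd (huniq (Sum.inr 0) _ _ he3N (by simp) he0N (by simp))
            (by simp [Sym2.eq_iff])
      subst he3
      have hN03 : s(Sum.inr 0, Sum.inr 3) ∉ N := fun h =>
        absurd (huniq (Sum.inr 0) _ _ h (by simp) he0N (by simp)) (by simp [Sym2.eq_iff])
      have hNeq : N = Sym2.map Sum.inl '' P ∪
          {s(Sum.inl u, Sum.inr 0), s(Sum.inr 1, Sum.inr 2), s(Sum.inr 3, Sum.inl v)} := by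
        ext e
        constructor
        · intro he
          rcases mem_addSquare_iff.1 (hNsub he).1 with ⟨f, -, -, rfl⟩ | hsq
          · exact Or.inl ⟨f, he, rfl⟩
          · simp only [sq, Set.mem_insert_iff, Set.mem_singleton_iff] at hsq
            rcases hsq with rfl|rfl|rfl|rfl|rfl|rfl
            · exact Or.inr (by simp)
            · exact absurd he hN01
            · exact Or.inr (by simp)
            · exact absurd he hN23
            · exact Or.inr (by simp)
            · exact absurd he hN03
        · rintro (⟨f, hf, rfl⟩ | he)
          · exact hf
          · rcases he with rfl | rfl | rfl
            · exact he0N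
            · exact he2N
            · exact he3N
      refine Or.inr (Or.inr ⟨hNeq, ⟨?_, fun w => ?_⟩⟩)
      · rintro f (hf | rfl)
        · exact hPsub hf
        · exact huv
      · by_cases hwu : w = u
        · subst hwu
          refine ⟨s(w, v), ⟨Or.inr rfl, by simp [Sym2.mem_iff]⟩, ?_⟩
          rintro g ⟨(hgP | rfl), hwg⟩
          · exfalso
            have := huniq (Sum.inl w) _ _ hgP (inl_mem_map.2 hwg) he0N (by simp)
            exact inr_not_mem_map (i := 0) (this ▸ (by simp : (Sum.inr 0 : V ⊕ Fin 4) ∈ s(Sum.inl w, Sum.inr 0)))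
          · rfl
        · by_cases hwv : w = v
          · subst hwv
            refine ⟨s(u, w), ⟨Or.inr rfl, by simp [Sym2.mem_iff]⟩, ?_⟩
            rintro g ⟨(hgP | rfl), hwg⟩
            · exfalso
              have := huniq (Sum.inl w) _ _ hgP (inl_mem_map.2 hwg) he3N (by simp)
              exact inr_not_mem_map (i := 3) (this ▸ (by simp : (Sum.inr 3 : V ⊕ Fin 4) ∈ s(Sum.inr 3, Sum.inl w)))
            · rfl
          · obtain ⟨e, ⟨heN, hwe⟩, -⟩ := hN.2 (Sum.inl w)
            rcases mem_addSquare_iff.1 ((hNsub heN).1) with ⟨f, -, -, rfl⟩ | hsq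
            · refine ⟨f, ⟨Or.inl heN, inl_mem_map.1 hwe⟩, ?_⟩
              rintro g ⟨(hgP | rfl), hwg⟩
              · exact Sym2.map.injective Sum.inl_injective
                  (huniq (Sum.inl w) _ _ hgP (inl_mem_map.2 hwg) heN hwe)
              · exact absurd (by simpa [Sym2.mem_iff] using hwg) (not_or.2 ⟨hwu, hwv⟩)
            · exfalso
              simp only [sq, Set.mem_insert_iff, Set.mem_singleton_iff] at hsq
              rcases hsq with rfl|rfl|rfl|rfl|rfl|rfl <;>
                first
                  | (exact hwu (by simpa [Sym2.mem_iff] using hwe))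
                  | (exact hwv (by simpa [Sym2.mem_iff] using hwe))
                  | simp [Sym2.mem_iff] at hwe
    · -- Case A : w₁w₄ ∈ N
      have hN0 : s(Sum.inl u, Sum.inr 0) ∉ N := fun h =>
        absurd (huniq (Sum.inr 0) _ _ h (by simp) he0N (by simp)) (by simp [Sym2.eq_iff])
      have hN3 : s(Sum.inr 3, Sum.inl v) ∉ N := fun h =>
        absurd (huniq (Sum.inr 3) _ _ h (by simp) he0N (by simp)) (by simp [Sym2.eq_iff])
      refine Or.inl ⟨?_, mkP hN0 hN3⟩
      ext e
      constructor
      · intro he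
        rcases mem_addSquare_iff.1 (hNsub he).1 with ⟨f, -, -, rfl⟩ | hsq
        · exact Or.inl ⟨f, he, rfl⟩
        · simp only [sq, Set.mem_insert_iff, Set.mem_singleton_iff] at hsq
          rcases hsq with rfl|rfl|rfl|rfl|rfl|rfl
          · exact absurd he hN0
          · exact absurd he hN01
          · exact Or.inr (by simp)
          · exact absurd he hN23
          · exact absurd he hN3
          · exact Or.inr (by simp)
      · rintro (⟨f, hf, rfl⟩ | he)
        · exact hf
        · rcases he with rfl | rfl
          · exact he0N
          · exact he2N

lemma pm_edge_unique {G : SimpleGraph V} {M : Set (Sym2 V)} (h : IsPM G M) {x : V}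
    {e₁ e₂ : Sym2 V} (h1 : e₁ ∈ M) (hx1 : x ∈ e₁) (h2 : e₂ ∈ M) (hx2 : x ∈ e₂) : e₁ = e₂ := by
  obtain ⟨e, -, hq⟩ := h.2 x
  rw [hq e₁ ⟨h1, hx1⟩, hq e₂ ⟨h2, hx2⟩]

lemma pm_delete_of_pm {G : SimpleGraph V} {P S : Set (Sym2 V)}
    (hP : IsPM G P) (h : ∀ f ∈ P, f ∉ S) : IsPM (G.deleteEdges S) P :=
  ⟨fun f hf => by rw [SimpleGraph.edgeSet_deleteEdges]; exact ⟨hP.1 hf, h f hf⟩, hP.2⟩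

lemma pm_of_pm_delete {G : SimpleGraph V} {P S : Set (Sym2 V)}
    (hP : IsPM (G.deleteEdges S) P) : IsPM G P :=
  ⟨fun f hf => by
    have := hP.1 hf; rw [SimpleGraph.edgeSet_deleteEdges] at this; exact this.1, hP.2⟩

lemma trivial_antiforcing {G : SimpleGraph V} {M : Set (Sym2 V)} (hM : IsPM G M) :
    IsAntiForcingSet G M (G.edgeSet \ M) := by
  refine ⟨Set.diff_subset, Set.diff_inter_self, pm_delete_of_pm hM fun f hf h => h.2 hf, ?_⟩
  intro M' hM'
  have hsub : M' ⊆ M := by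
    intro f hf
    have := hM'.1 hf
    rw [SimpleGraph.edgeSet_deleteEdges] at this
    rcases this with ⟨h1, h2⟩
    by_contra hfM
    exact h2 ⟨h1, hfM⟩
  refine Set.Subset.antisymm hsub ?_
  intro f hf
  induction f using Sym2.ind with
  | _ a b =>
    obtain ⟨g, ⟨hgM', hag⟩, -⟩ := hM'.2 a
    have : g = s(a, b) := pm_edge_unique hM (hsub hgM') hag hf (by simp [Sym2.mem_iff])
    exact this ▸ hgM'

lemma af_spec [Finite V] {G : SimpleGraph V} {M : Set (Sym2 V)} (hM : IsPM G M) :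
    ∃ S, IsAntiForcingSet G M S ∧ S.ncard = af G M :=
  Nat.sInf_mem (⟨(G.edgeSet \ M).ncard, ⟨_, trivial_antiforcing hM, rfl⟩⟩ :
    Set.Nonempty {n | ∃ S, IsAntiForcingSet G M S ∧ S.ncard = n})

lemma af_le {G : SimpleGraph V} {M S : Set (Sym2 V)} (h : IsAntiForcingSet G M S) :
    af G M ≤ S.ncard :=
  Nat.sInf_le ⟨S, h, rfl⟩

lemma Af_bddAbove [Finite V] (G : SimpleGraph V) :
    BddAbove {n | ∃ M, IsPM G M ∧ af G M = n} := by
  refine ⟨G.edgeSet.ncard, ?_⟩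
  rintro n ⟨M', hM', rfl⟩
  calc af G M' ≤ (G.edgeSet \ M').ncard := af_le (trivial_antiforcing hM')
    _ ≤ G.edgeSet.ncard := Set.ncard_le_ncard Set.diff_subset (Set.toFinite _)

lemma af_le_Af [Finite V] {G : SimpleGraph V} {M : Set (Sym2 V)} (hM : IsPM G M) :
    af G M ≤ Af G :=
  le_csSup (Af_bddAbove G) ⟨M, hM, rfl⟩

lemma map_ne_of_inr_mem {f : Sym2 V} {e : Sym2 (V ⊕ Fin 4)} {i : Fin 4}
    (h : (Sum.inr i : V ⊕ Fin 4) ∈ e) : Sym2.map Sum.inl f ≠ e :=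
  fun hEq => inr_not_mem_map (i := i) (hEq ▸ h)

/-- Upper bound: every PM of `addSquare G u v` has anti-forcing number at most `af G M + 1`. -/
lemma af_up [Finite V] {G : SimpleGraph V} {u v : V} (huv : G.Adj u v)
    {M : Set (Sym2 V)} (hM : IsPM G M)
    (hmaxM : ∀ M', IsPM G M' → af G M' ≤ af G M)
    {N : Set (Sym2 (V ⊕ Fin 4))} (hN : IsPM (addSquare G u v) N) :
    af (addSquare G u v) N ≤ af G M + 1 := by
  classical
  have hN0 : IsPM ((addSquare G u v).deleteEdges ∅) N := by
    rwa [SimpleGraph.deleteEdges_empty]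
  obtain ⟨P, hPmem, hPuv, hcase⟩ := pm_structure huv hN0
  rcases hcase with ⟨hNeq, hPM⟩ | ⟨hNeq, hPM⟩ | ⟨hNeq, hPM⟩
  · -- Type A
    obtain ⟨S', hS', hS'card⟩ := af_spec hPM
    have hdisj : ∀ f ∈ P, f ∉ S' := by
      intro f hf hfS
      exact Set.eq_empty_iff_forall_notMem.1 hS'.2.1 f ⟨hfS, hf⟩
    by_cases huvS : s(u, v) ∈ S'
    · set Se : Set (Sym2 (V ⊕ Fin 4)) :=
        insert s(Sum.inl u, Sum.inr 0)
          (insert s(Sum.inr 0, Sum.inr 1) (Sym2.map Sum.inl '' (S' \ {s(u, v)}))) with hSedef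
      have hmemSe : ∀ e ∈ Se, e = s(Sum.inl u, Sum.inr 0) ∨ e = s(Sum.inr 0, Sum.inr 1) ∨
          ∃ f ∈ S', f ≠ s(u, v) ∧ e = Sym2.map Sum.inl f := by
        rintro e (rfl | rfl | ⟨f, ⟨hf1, hf2⟩, rfl⟩)
        · exact Or.inl rfl
        · exact Or.inr (Or.inl rfl)
        · exact Or.inr (Or.inr ⟨f, hf1, hf2, rfl⟩)
      have hmapSe : ∀ f, f ∉ S' → Sym2.map Sum.inl f ∉ Se := by
        intro f hf hmem
        rcases hmemSe _ hmem with h | h | ⟨g, hg1, hg2, hEq⟩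
        · exact map_ne_of_inr_mem (i := 0) (by simp) h
        · exact map_ne_of_inr_mem (i := 0) (by simp) h
        · exact hf ((Sym2.map.injective Sum.inl_injective hEq) ▸ hg1)
      have h03Se : s(Sum.inr 0, Sum.inr 3) ∉ Se := by
        intro hmem
        rcases hmemSe _ hmem with h | h | ⟨g, hg1, hg2, hEq⟩
        · simp [Sym2.eq_iff] at h
        · simp [Sym2.eq_iff] at h
        · exact map_ne_of_inr_mem (i := 0) (by simp) hEq.symm
      have h12Se : s(Sum.inr 1, Sum.inr 2) ∉ Se := by
        intro hmem
        rcases hmemSe _ hmem with h | h | ⟨g, hg1, hg2, hEq⟩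
        · simp [Sym2.eq_iff] at h
        · simp [Sym2.eq_iff] at h
        · exact map_ne_of_inr_mem (i := 1) (by simp) hEq.symm
      have haf : IsAntiForcingSet (addSquare G u v) N Se := by
        refine ⟨?_, ?_, ?_, ?_⟩
        · rintro e he
          rcases hmemSe _ he with rfl | rfl | ⟨f, hf1, hf2, rfl⟩
          · exact sq_mem_edgeSet (by simp [sq])
          · exact sq_mem_edgeSet (by simp [sq])
          · exact map_mem_addSquare.2 ⟨hS'.1 hf1, hf2⟩
        · rw [Set.eq_empty_iff_forall_notMem]
          rintro e ⟨heSe, heN⟩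
          rw [hNeq] at heN
          rcases hmemSe _ heSe with rfl | rfl | ⟨f, hf1, hf2, rfl⟩
          · rcases heN with ⟨g, hg, hEq⟩ | h
            · exact map_ne_of_inr_mem (i := 0) (by simp) hEq
            · rcases h with h | h <;> simp [Sym2.eq_iff] at h
          · rcases heN with ⟨g, hg, hEq⟩ | h
            · exact map_ne_of_inr_mem (i := 0) (by simp) hEq
            · rcases h with h | h <;> simp [Sym2.eq_iff] at h
          · rcases heN with ⟨g, hg, hEq⟩ | h
            · exact hdisj g hg (((Sym2.map.injective Sum.inl_injective hEq) ▸ hf1))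
            · rcases h with h | h
              · exact map_ne_of_inr_mem (i := 0) (by simp) h
              · exact map_ne_of_inr_mem (i := 1) (by simp) h
        · rw [hNeq]
          exact isPM_typeA hPM hPuv (fun f hf => hmapSe f (hdisj f hf)) h03Se h12Se
        · intro N' hN'
          obtain ⟨P', hP'mem, hP'uv, hcase'⟩ := pm_structure huv hN'
          have hN'Se : ∀ e ∈ N', e ∉ Se := by
            intro e he
            have := hN'.1 he
            rw [SimpleGraph.edgeSet_deleteEdges] at this
            exact this.2
          have hP'S : ∀ f ∈ P', f ∉ S' := by
            intro f hf hfS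
            have h1 : Sym2.map Sum.inl f ∈ N' := (hP'mem f).1 hf
            have h2 : f ≠ s(u, v) := by
              intro hEq
              have := hN'.1 h1
              rw [SimpleGraph.edgeSet_deleteEdges] at this
              exact (map_mem_addSquare.1 this.1).2 hEq
            exact hN'Se _ h1 (by
              rw [hSedef]
              exact Or.inr (Or.inr ⟨f, ⟨hfS, h2⟩, rfl⟩))
          rcases hcase' with ⟨hNeq', hPM'⟩ | ⟨hNeq', hPM'⟩ | ⟨hNeq', hPM'⟩
          · have : P' = P := hS'.2.2.2 P' (pm_delete_of_pm hPM' hP'S)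
            rw [hNeq', hNeq, this]
          · exfalso
            have h01 : s(Sum.inr 0, Sum.inr 1) ∈ N' := by
              rw [hNeq']; exact Or.inr (by simp)
            exact hN'Se _ h01 (by rw [hSedef]; exact Or.inr (Or.inl rfl))
          · exfalso
            have hu0 : s(Sum.inl u, Sum.inr 0) ∈ N' := by
              rw [hNeq']; exact Or.inr (by simp)
            exact hN'Se _ hu0 (by rw [hSedef]; exact Or.inl rfl)
      have hcount : Se.ncard ≤ af G P + 1 := by
        have h1 : (Sym2.map (Sum.inl : V → V ⊕ Fin 4) '' (S' \ {s(u, v)})).ncard = (S' \ {s(u, v)}).ncard :=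
          Set.ncard_image_of_injective _ (Sym2.map.injective Sum.inl_injective)
        have h2 : (S' \ {s(u, v)}).ncard = S'.ncard - 1 :=
          Set.ncard_diff_singleton_of_mem huvS
        have h3 : 0 < S'.ncard := (Set.ncard_pos (Set.toFinite _)).2 ⟨_, huvS⟩
        have h4 := Set.ncard_insert_le s(Sum.inr 0, Sum.inr 1)
          (Sym2.map (Sum.inl : V → V ⊕ Fin 4) '' (S' \ {s(u, v)}))
        have h5 := Set.ncard_insert_le s(Sum.inl u, Sum.inr 0)
          (insert s(Sum.inr 0, Sum.inr 1)
            (Sym2.map (Sum.inl : V → V ⊕ Fin 4) '' (S' \ {s(u, v)})))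
        rw [hSedef]
        omega
      calc af (addSquare G u v) N ≤ Se.ncard := af_le haf
        _ ≤ af G P + 1 := hcount
        _ ≤ af G M + 1 := by have := hmaxM P hPM; omega
    · set Se : Set (Sym2 (V ⊕ Fin 4)) :=
        insert s(Sum.inr 0, Sum.inr 1) (Sym2.map Sum.inl '' S') with hSedef
      have hmemSe : ∀ e ∈ Se, e = s(Sum.inr 0, Sum.inr 1) ∨
          ∃ f ∈ S', e = Sym2.map Sum.inl f := by
        rintro e (rfl | ⟨f, hf, rfl⟩)
        · exact Or.inl rfl
        · exact Or.inr ⟨f, hf, rfl⟩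
      have hmapSe : ∀ f, f ∉ S' → Sym2.map Sum.inl f ∉ Se := by
        intro f hf hmem
        rcases hmemSe _ hmem with h | ⟨g, hg1, hEq⟩
        · exact map_ne_of_inr_mem (i := 0) (by simp) h
        · exact hf ((Sym2.map.injective Sum.inl_injective hEq) ▸ hg1)
      have h03Se : s(Sum.inr 0, Sum.inr 3) ∉ Se := by
        intro hmem
        rcases hmemSe _ hmem with h | ⟨g, hg1, hEq⟩
        · simp [Sym2.eq_iff] at h
        · exact map_ne_of_inr_mem (i := 0) (by simp) hEq.symm
      have h12Se : s(Sum.inr 1, Sum.inr 2) ∉ Se := by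
        intro hmem
        rcases hmemSe _ hmem with h | ⟨g, hg1, hEq⟩
        · simp [Sym2.eq_iff] at h
        · exact map_ne_of_inr_mem (i := 1) (by simp) hEq.symm
      have haf : IsAntiForcingSet (addSquare G u v) N Se := by
        refine ⟨?_, ?_, ?_, ?_⟩
        · rintro e he
          rcases hmemSe _ he with rfl | ⟨f, hf, rfl⟩
          · exact sq_mem_edgeSet (by simp [sq])
          · exact map_mem_addSquare.2 ⟨hS'.1 hf, fun h => huvS (h ▸ hf)⟩
        · rw [Set.eq_empty_iff_forall_notMem]
          rintro e ⟨heSe, heN⟩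
          rw [hNeq] at heN
          rcases hmemSe _ heSe with rfl | ⟨f, hf, rfl⟩
          · rcases heN with ⟨g, hg, hEq⟩ | h
            · exact map_ne_of_inr_mem (i := 0) (by simp) hEq
            · rcases h with h | h <;> simp [Sym2.eq_iff] at h
          · rcases heN with ⟨g, hg, hEq⟩ | h
            · exact hdisj g hg (((Sym2.map.injective Sum.inl_injective hEq) ▸ hf))
            · rcases h with h | h
              · exact map_ne_of_inr_mem (i := 0) (by simp) h
              · exact map_ne_of_inr_mem (i := 1) (by simp) h
        · rw [hNeq]
          exact isPM_typeA hPM hPuv (fun f hf => hmapSe f (hdisj f hf)) h03Se h12Se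
        · intro N' hN'
          obtain ⟨P', hP'mem, hP'uv, hcase'⟩ := pm_structure huv hN'
          have hN'Se : ∀ e ∈ N', e ∉ Se := by
            intro e he
            have := hN'.1 he
            rw [SimpleGraph.edgeSet_deleteEdges] at this
            exact this.2
          have hP'S : ∀ f ∈ P', f ∉ S' := by
            intro f hf hfS
            exact hN'Se _ ((hP'mem f).1 hf) (by rw [hSedef]; exact Or.inr ⟨f, hfS, rfl⟩)
          rcases hcase' with ⟨hNeq', hPM'⟩ | ⟨hNeq', hPM'⟩ | ⟨hNeq', hPM'⟩
          · have : P' = P := hS'.2.2.2 P' (pm_delete_of_pm hPM' hP'S)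
            rw [hNeq', hNeq, this]
          · exfalso
            have h01 : s(Sum.inr 0, Sum.inr 1) ∈ N' := by
              rw [hNeq']; exact Or.inr (by simp)
            exact hN'Se _ h01 (by rw [hSedef]; exact Or.inl rfl)
          · exfalso
            -- type C: P' ∪ {uv} is a PM of G − S', forcing uv ∈ P, contradiction
            have hQ' : IsPM (G.deleteEdges S') (P' ∪ {s(u, v)}) := by
              refine pm_delete_of_pm hPM' ?_
              rintro f (hf | rfl)
              · exact hP'S f hf
              · exact huvS
            have : P' ∪ {s(u, v)} = P := hS'.2.2.2 _ hQ'
            exact hPuv (this ▸ (Or.inr rfl : s(u, v) ∈ P' ∪ {s(u, v)}))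
      have hcount : Se.ncard ≤ af G P + 1 := by
        have h1 : (Sym2.map (Sum.inl : V → V ⊕ Fin 4) '' S').ncard = S'.ncard :=
          Set.ncard_image_of_injective _ (Sym2.map.injective Sum.inl_injective)
        calc Se.ncard ≤ (Sym2.map Sum.inl '' S').ncard + 1 := Set.ncard_insert_le _ _
          _ = af G P + 1 := by rw [h1, hS'card]
      calc af (addSquare G u v) N ≤ Se.ncard := af_le haf
        _ ≤ af G P + 1 := hcount
        _ ≤ af G M + 1 := by have := hmaxM P hPM; omega
  · -- Type B
    obtain ⟨S', hS', hS'card⟩ := af_spec hPM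
    have hdisj : ∀ f ∈ P, f ∉ S' := by
      intro f hf hfS
      exact Set.eq_empty_iff_forall_notMem.1 hS'.2.1 f ⟨hfS, hf⟩
    set Se : Set (Sym2 (V ⊕ Fin 4)) :=
      insert s(Sum.inr 1, Sum.inr 2) (Sym2.map Sum.inl '' (S' \ {s(u, v)})) with hSedef
    have hmemSe : ∀ e ∈ Se, e = s(Sum.inr 1, Sum.inr 2) ∨
        ∃ f ∈ S', f ≠ s(u, v) ∧ e = Sym2.map Sum.inl f := by
      rintro e (rfl | ⟨f, ⟨hf1, hf2⟩, rfl⟩)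
      · exact Or.inl rfl
      · exact Or.inr ⟨f, hf1, hf2, rfl⟩
    have hmapSe : ∀ f, f ∉ S' → Sym2.map Sum.inl f ∉ Se := by
      intro f hf hmem
      rcases hmemSe _ hmem with h | ⟨g, hg1, hg2, hEq⟩
      · exact map_ne_of_inr_mem (i := 1) (by simp) h
      · exact hf ((Sym2.map.injective Sum.inl_injective hEq) ▸ hg1)
    have h01Se : s(Sum.inr 0, Sum.inr 1) ∉ Se := by
      intro hmem
      rcases hmemSe _ hmem with h | ⟨g, hg1, hg2, hEq⟩
      · simp [Sym2.eq_iff] at h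
      · exact map_ne_of_inr_mem (i := 0) (by simp) hEq.symm
    have h23Se : s(Sum.inr 2, Sum.inr 3) ∉ Se := by
      intro hmem
      rcases hmemSe _ hmem with h | ⟨g, hg1, hg2, hEq⟩
      · simp [Sym2.eq_iff] at h
      · exact map_ne_of_inr_mem (i := 2) (by simp) hEq.symm
    have haf : IsAntiForcingSet (addSquare G u v) N Se := by
      refine ⟨?_, ?_, ?_, ?_⟩
      · rintro e he
        rcases hmemSe _ he with rfl | ⟨f, hf1, hf2, rfl⟩
        · exact sq_mem_edgeSet (by simp [sq])
        · exact map_mem_addSquare.2 ⟨hS'.1 hf1, hf2⟩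
      · rw [Set.eq_empty_iff_forall_notMem]
        rintro e ⟨heSe, heN⟩
        rw [hNeq] at heN
        rcases hmemSe _ heSe with rfl | ⟨f, hf1, hf2, rfl⟩
        · rcases heN with ⟨g, hg, hEq⟩ | h
          · exact map_ne_of_inr_mem (i := 1) (by simp) hEq
          · rcases h with h | h <;> simp [Sym2.eq_iff] at h
        · rcases heN with ⟨g, hg, hEq⟩ | h
          · exact hdisj g hg (((Sym2.map.injective Sum.inl_injective hEq) ▸ hf1))
          · rcases h with h | h
            · exact map_ne_of_inr_mem (i := 0) (by simp) h
            · exact map_ne_of_inr_mem (i := 2) (by simp) h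
      · rw [hNeq]
        exact isPM_typeB hPM hPuv (fun f hf => hmapSe f (hdisj f hf)) h01Se h23Se
      · intro N' hN'
        obtain ⟨P', hP'mem, hP'uv, hcase'⟩ := pm_structure huv hN'
        have hN'Se : ∀ e ∈ N', e ∉ Se := by
          intro e he
          have := hN'.1 he
          rw [SimpleGraph.edgeSet_deleteEdges] at this
          exact this.2
        have hP'S : ∀ f ∈ P', f ∉ S' := by
          intro f hf hfS
          have h1 : Sym2.map Sum.inl f ∈ N' := (hP'mem f).1 hf
          have h2 : f ≠ s(u, v) := by
            intro hEq
            have := hN'.1 h1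
            rw [SimpleGraph.edgeSet_deleteEdges] at this
            exact (map_mem_addSquare.1 this.1).2 hEq
          exact hN'Se _ h1 (by rw [hSedef]; exact Or.inr ⟨f, ⟨hfS, h2⟩, rfl⟩)
        have h12N' : s(Sum.inr 1, Sum.inr 2) ∉ N' := fun h =>
          hN'Se _ h (by rw [hSedef]; exact Or.inl rfl)
        rcases hcase' with ⟨hNeq', hPM'⟩ | ⟨hNeq', hPM'⟩ | ⟨hNeq', hPM'⟩
        · exact absurd (by rw [hNeq']; exact Or.inr (by simp)) h12N'
        · have : P' = P := hS'.2.2.2 P' (pm_delete_of_pm hPM' hP'S)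
          rw [hNeq', hNeq, this]
        · exact absurd (by rw [hNeq']; exact Or.inr (by simp)) h12N'
    have hcount : Se.ncard ≤ af G P + 1 := by
      have h1 : (Sym2.map (Sum.inl : V → V ⊕ Fin 4) '' (S' \ {s(u, v)})).ncard = (S' \ {s(u, v)}).ncard :=
        Set.ncard_image_of_injective _ (Sym2.map.injective Sum.inl_injective)
      have h2 : (S' \ {s(u, v)}).ncard ≤ S'.ncard :=
        Set.ncard_le_ncard Set.diff_subset (Set.toFinite _)
      calc Se.ncard ≤ (Sym2.map Sum.inl '' (S' \ {s(u, v)})).ncard + 1 :=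
            Set.ncard_insert_le _ _
        _ ≤ af G P + 1 := by rw [h1, ← hS'card]; omega
    calc af (addSquare G u v) N ≤ Se.ncard := af_le haf
      _ ≤ af G P + 1 := hcount
      _ ≤ af G M + 1 := by have := hmaxM P hPM; omega
  · -- Type C
    obtain ⟨S', hS', hS'card⟩ := af_spec hPM
    have hdisj : ∀ f ∈ P ∪ {s(u, v)}, f ∉ S' := by
      intro f hf hfS
      exact Set.eq_empty_iff_forall_notMem.1 hS'.2.1 f ⟨hfS, hf⟩
    have huvS : s(u, v) ∉ S' := hdisj _ (Or.inr rfl)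
    set Se : Set (Sym2 (V ⊕ Fin 4)) :=
      insert s(Sum.inr 0, Sum.inr 3) (Sym2.map Sum.inl '' S') with hSedef
    have hmemSe : ∀ e ∈ Se, e = s(Sum.inr 0, Sum.inr 3) ∨
        ∃ f ∈ S', e = Sym2.map Sum.inl f := by
      rintro e (rfl | ⟨f, hf, rfl⟩)
      · exact Or.inl rfl
      · exact Or.inr ⟨f, hf, rfl⟩
    have hmapSe : ∀ f, f ∉ S' → Sym2.map Sum.inl f ∉ Se := by
      intro f hf hmem
      rcases hmemSe _ hmem with h | ⟨g, hg1, hEq⟩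
      · exact map_ne_of_inr_mem (i := 0) (by simp) h
      · exact hf ((Sym2.map.injective Sum.inl_injective hEq) ▸ hg1)
    have hu0Se : s(Sum.inl u, Sum.inr 0) ∉ Se := by
      intro hmem
      rcases hmemSe _ hmem with h | ⟨g, hg1, hEq⟩
      · simp [Sym2.eq_iff] at h
      · exact map_ne_of_inr_mem (i := 0) (by simp) hEq.symm
    have h12Se : s(Sum.inr 1, Sum.inr 2) ∉ Se := by
      intro hmem
      rcases hmemSe _ hmem with h | ⟨g, hg1, hEq⟩
      · simp [Sym2.eq_iff] at h
      · exact map_ne_of_inr_mem (i := 1) (by simp) hEq.symm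
    have h3vSe : s(Sum.inr 3, Sum.inl v) ∉ Se := by
      intro hmem
      rcases hmemSe _ hmem with h | ⟨g, hg1, hEq⟩
      · simp [Sym2.eq_iff] at h
      · exact map_ne_of_inr_mem (i := 3) (by simp) hEq.symm
    have haf : IsAntiForcingSet (addSquare G u v) N Se := by
      refine ⟨?_, ?_, ?_, ?_⟩
      · rintro e he
        rcases hmemSe _ he with rfl | ⟨f, hf, rfl⟩
        · exact sq_mem_edgeSet (by simp [sq])
        · exact map_mem_addSquare.2 ⟨hS'.1 hf, fun h => huvS (h ▸ hf)⟩
      · rw [Set.eq_empty_iff_forall_notMem]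
        rintro e ⟨heSe, heN⟩
        rw [hNeq] at heN
        rcases hmemSe _ heSe with rfl | ⟨f, hf, rfl⟩
        · rcases heN with ⟨g, hg, hEq⟩ | h
          · exact map_ne_of_inr_mem (i := 0) (by simp) hEq
          · rcases h with h | h | h <;> simp [Sym2.eq_iff] at h
        · rcases heN with ⟨g, hg, hEq⟩ | h
          · exact hdisj g (Or.inl hg) (((Sym2.map.injective Sum.inl_injective hEq) ▸ hf))
          · rcases h with h | h | h
            · exact map_ne_of_inr_mem (i := 0) (by simp) h
            · exact map_ne_of_inr_mem (i := 1) (by simp) h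
            · exact map_ne_of_inr_mem (i := 3) (by simp) h
      · rw [hNeq]
        exact isPM_typeC huv hPM hPuv (fun f hf => hmapSe f (hdisj f (Or.inl hf)))
          hu0Se h12Se h3vSe
      · intro N' hN'
        obtain ⟨P', hP'mem, hP'uv, hcase'⟩ := pm_structure huv hN'
        have hN'Se : ∀ e ∈ N', e ∉ Se := by
          intro e he
          have := hN'.1 he
          rw [SimpleGraph.edgeSet_deleteEdges] at this
          exact this.2
        have hP'S : ∀ f ∈ P', f ∉ S' := by
          intro f hf hfS
          exact hN'Se _ ((hP'mem f).1 hf) (by rw [hSedef]; exact Or.inr ⟨f, hfS, rfl⟩)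
        rcases hcase' with ⟨hNeq', hPM'⟩ | ⟨hNeq', hPM'⟩ | ⟨hNeq', hPM'⟩
        · exfalso
          have h03 : s(Sum.inr 0, Sum.inr 3) ∈ N' := by
            rw [hNeq']; exact Or.inr (by simp)
          exact hN'Se _ h03 (by rw [hSedef]; exact Or.inl rfl)
        · exfalso
          have : P' = P ∪ {s(u, v)} := hS'.2.2.2 P' (pm_delete_of_pm hPM' hP'S)
          exact hP'uv (this ▸ (Or.inr rfl : s(u, v) ∈ P ∪ {s(u, v)}))
        · have hQ' : IsPM (G.deleteEdges S') (P' ∪ {s(u, v)}) := by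
            refine pm_delete_of_pm hPM' ?_
            rintro f (hf | rfl)
            · exact hP'S f hf
            · exact huvS
          have hQeq : P' ∪ {s(u, v)} = P ∪ {s(u, v)} := hS'.2.2.2 _ hQ'
          have hPP : P' = P := by
            ext f
            constructor
            · intro hf
              have hmem : f ∈ P ∪ {s(u, v)} := hQeq ▸ (Or.inl hf : f ∈ P' ∪ {s(u, v)})
              rcases hmem with h | h
              · exact h
              · exact absurd (h ▸ hf) hP'uv
            · intro hf
              have hmem : f ∈ P' ∪ {s(u, v)} := hQeq.symm ▸ (Or.inl hf : f ∈ P ∪ {s(u, v)})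
              rcases hmem with h | h
              · exact h
              · exact absurd (h ▸ hf) hPuv
          rw [hNeq', hNeq, hPP]
    have hcount : Se.ncard ≤ af G (P ∪ {s(u, v)}) + 1 := by
      have h1 : (Sym2.map (Sum.inl : V → V ⊕ Fin 4) '' S').ncard = S'.ncard :=
        Set.ncard_image_of_injective _ (Sym2.map.injective Sum.inl_injective)
      calc Se.ncard ≤ (Sym2.map Sum.inl '' S').ncard + 1 := Set.ncard_insert_le _ _
        _ = af G (P ∪ {s(u, v)}) + 1 := by rw [h1, hS'card]
    calc af (addSquare G u v) N ≤ Se.ncard := af_le haf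
      _ ≤ af G (P ∪ {s(u, v)}) + 1 := hcount
      _ ≤ af G M + 1 := by have := hmaxM _ hPM; omega

/-- Lower bound: the anti-forcing number of `M_e` is at least `af G M + 1`. -/
lemma af_low [Finite V] {G : SimpleGraph V} {u v : V} (huv : G.Adj u v)
    {M : Set (Sym2 V)} (hM : IsPM G M) (heM : s(u, v) ∉ M) :
    af G M + 1 ≤ af (addSquare G u v)
      (Sym2.map Sum.inl '' M ∪ {s(Sum.inr 0, Sum.inr 3), s(Sum.inr 1, Sum.inr 2)}) := by
  classical
  set Me : Set (Sym2 (V ⊕ Fin 4)) :=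
    Sym2.map Sum.inl '' M ∪ {s(Sum.inr 0, Sum.inr 3), s(Sum.inr 1, Sum.inr 2)} with hMedef
  have hMePM : IsPM (addSquare G u v) Me := by
    have := isPM_typeA (S := (∅ : Set (Sym2 (V ⊕ Fin 4)))) hM heM
      (fun f _ => Set.notMem_empty _) (Set.notMem_empty _) (Set.notMem_empty _)
    rwa [SimpleGraph.deleteEdges_empty] at this
  obtain ⟨Se, hSe, hSecard⟩ := af_spec hMePM
  have hdisjMe : ∀ e ∈ Se, e ∉ Me := by
    intro e he hMe
    exact Set.eq_empty_iff_forall_notMem.1 hSe.2.1 e ⟨he, hMe⟩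
  have hMnotSe : ∀ f ∈ M, Sym2.map Sum.inl f ∉ Se := by
    intro f hf hfe
    exact hdisjMe _ hfe (Or.inl ⟨f, hf, rfl⟩)
  have h03Se : s(Sum.inr 0, Sum.inr 3) ∉ Se := fun h => hdisjMe _ h (Or.inr (by simp))
  have h12Se : s(Sum.inr 1, Sum.inr 2) ∉ Se := fun h => hdisjMe _ h (Or.inr (by simp))
  -- Se must contain w₁w₂ or w₃w₄
  have hx : s(Sum.inr 0, Sum.inr 1) ∈ Se ∨ s(Sum.inr 2, Sum.inr 3) ∈ Se := by
    by_contra hcon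
    push_neg at hcon
    have hB := isPM_typeB hM heM hMnotSe hcon.1 hcon.2
    have hEq := hSe.2.2.2 _ hB
    have h01 : s(Sum.inr 0, Sum.inr 1) ∈ Me := by
      rw [← hEq]; exact Set.mem_union_right _ (by simp)
    rw [hMedef] at h01
    simp only [Set.mem_union, Set.mem_image, Set.mem_insert_iff,
      Set.mem_singleton_iff] at h01
    rcases h01 with ⟨g, hg, hEq'⟩ | h | h
    · exact map_ne_of_inr_mem (i := 0) (by simp) hEq'
    · simp [Sym2.eq_iff] at h
    · simp [Sym2.eq_iff] at h
  obtain ⟨x, hxSe, hx01⟩ : ∃ x, x ∈ Se ∧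
      (x = s(Sum.inr 0, Sum.inr 1) ∨ x = s(Sum.inr 2, Sum.inr 3)) := by
    rcases hx with h | h
    · exact ⟨_, h, Or.inl rfl⟩
    · exact ⟨_, h, Or.inr rfl⟩
  set S₀ : Set (Sym2 V) := {f | f ∈ G.edgeSet ∧ Sym2.map Sum.inl f ∈ Se} with hS₀def
  have himg : Sym2.map Sum.inl '' S₀ ⊆ Se := by rintro e ⟨f, hf, rfl⟩; exact hf.2
  have hS₀M : ∀ f ∈ S₀, f ∉ M := fun f hf hfM => hMnotSe f hfM hf.2
  have hS₀card : S₀.ncard = (Sym2.map (Sum.inl : V → V ⊕ Fin 4) '' S₀).ncard :=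
    (Set.ncard_image_of_injective _ (Sym2.map.injective Sum.inl_injective)).symm
  have hxnotimg : x ∉ Sym2.map Sum.inl '' S₀ := by
    rintro ⟨g, hg, hEq⟩
    rcases hx01 with rfl | rfl
    · exact map_ne_of_inr_mem (i := 0) (by simp) hEq
    · exact map_ne_of_inr_mem (i := 2) (by simp) hEq
  -- uniqueness transfer for matchings avoiding uv
  have typeAunique : ∀ M'' : Set (Sym2 V), IsPM G M'' → s(u, v) ∉ M'' →
      (∀ f ∈ M'', Sym2.map Sum.inl f ∉ Se) → M'' = M := by
    intro M'' hM'' huvM'' hS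
    have hA := isPM_typeA hM'' huvM'' hS h03Se h12Se
    have hEqMe := hSe.2.2.2 _ hA
    ext f
    constructor
    · intro hf
      have hfm : Sym2.map Sum.inl f ∈ Me := by
        rw [← hEqMe]; exact Set.mem_union_left _ ⟨f, hf, rfl⟩
      rw [hMedef] at hfm
      simp only [Set.mem_union, Set.mem_image, Set.mem_insert_iff,
        Set.mem_singleton_iff] at hfm
      rcases hfm with ⟨g, hg, hEq'⟩ | h | h
      · exact (Sym2.map.injective Sum.inl_injective hEq').symm ▸ hg
      · exact absurd h (map_ne_of_inr_mem (e := s(Sum.inr 0, Sum.inr 3)) (i := 0) (by simp))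
      · exact absurd h (map_ne_of_inr_mem (e := s(Sum.inr 1, Sum.inr 2)) (i := 1) (by simp))
    · intro hf
      have hfm : Sym2.map Sum.inl f ∈ Me := by
        rw [hMedef]; exact Set.mem_union_left _ ⟨f, hf, rfl⟩
      rw [← hEqMe] at hfm
      simp only [Set.mem_union, Set.mem_image, Set.mem_insert_iff,
        Set.mem_singleton_iff] at hfm
      rcases hfm with ⟨g, hg, hEq'⟩ | h | h
      · exact (Sym2.map.injective Sum.inl_injective hEq').symm ▸ hg
      · exact absurd h (map_ne_of_inr_mem (e := s(Sum.inr 0, Sum.inr 3)) (i := 0) (by simp))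
      · exact absurd h (map_ne_of_inr_mem (e := s(Sum.inr 1, Sum.inr 2)) (i := 1) (by simp))
  by_cases hmix : s(Sum.inl u, Sum.inr 0) ∈ Se ∨ s(Sum.inr 3, Sum.inl v) ∈ Se
  · -- a mixed edge lies in Se : use S₀ ∪ {uv}
    obtain ⟨y, hySe, hy⟩ : ∃ y, y ∈ Se ∧
        (y = s(Sum.inl u, Sum.inr 0) ∨ y = s(Sum.inr 3, Sum.inl v)) := by
      rcases hmix with h | h
      · exact ⟨_, h, Or.inl rfl⟩
      · exact ⟨_, h, Or.inr rfl⟩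
    have hynotimg : y ∉ Sym2.map Sum.inl '' S₀ := by
      rintro ⟨g, hg, hEq⟩
      rcases hy with rfl | rfl
      · exact map_ne_of_inr_mem (i := 0) (by simp) hEq
      · exact map_ne_of_inr_mem (i := 3) (by simp) hEq
    have hxy : x ≠ y := by
      rcases hx01 with rfl | rfl <;> rcases hy with rfl | rfl <;> simp [Sym2.eq_iff]
    have haf : IsAntiForcingSet G M (insert s(u, v) S₀) := by
      refine ⟨?_, ?_, ?_, ?_⟩
      · rintro f (rfl | hf)
        · exact huv
        · exact hf.1
      · rw [Set.eq_empty_iff_forall_notMem]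
        rintro f ⟨(rfl | hf), hfM⟩
        · exact heM hfM
        · exact hS₀M f hf hfM
      · refine pm_delete_of_pm hM ?_
        intro f hf hfS
        rcases hfS with rfl | h
        · exact heM hf
        · exact hS₀M f h hf
      · intro M'' hM''2
        have hGM'' := pm_of_pm_delete hM''2
        have hM''S : ∀ f ∈ M'', f ∉ insert s(u, v) S₀ := by
          intro f hf
          have := hM''2.1 hf
          rw [SimpleGraph.edgeSet_deleteEdges] at this
          exact this.2
        have huvM'' : s(u, v) ∉ M'' := fun h => hM''S _ h (Or.inl rfl)
        refine typeAunique M'' hGM'' huvM'' ?_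
        intro f hf hfe
        exact hM''S f hf (Or.inr ⟨hGM''.1 hf, hfe⟩)
    have hc1 : af G M ≤ (insert s(u, v) S₀).ncard := af_le haf
    have hc2 : (insert s(u, v) S₀).ncard ≤ S₀.ncard + 1 := Set.ncard_insert_le _ _
    have hc3 : (Sym2.map (Sum.inl : V → V ⊕ Fin 4) '' S₀).ncard + 2 ≤ Se.ncard := by
      have hsub : insert x (insert y (Sym2.map Sum.inl '' S₀)) ⊆ Se := by
        rintro e (rfl | rfl | he)
        · exact hxSe
        · exact hySe
        · exact himg he
      have h1 : (insert y (Sym2.map (Sum.inl : V → V ⊕ Fin 4) '' S₀)).ncard =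
          (Sym2.map (Sum.inl : V → V ⊕ Fin 4) '' S₀).ncard + 1 :=
        Set.ncard_insert_of_notMem hynotimg (Set.toFinite _)
      have h2 : (insert x (insert y (Sym2.map (Sum.inl : V → V ⊕ Fin 4) '' S₀))).ncard =
          (insert y (Sym2.map (Sum.inl : V → V ⊕ Fin 4) '' S₀)).ncard + 1 :=
        Set.ncard_insert_of_notMem (by
          rintro (rfl | h)
          · exact hxy rfl
          · exact hxnotimg h) (Set.toFinite _)
      have h3 := Set.ncard_le_ncard hsub (Set.toFinite _)
      omega
    rw [hSecard] at hc3
    omega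
  · push_neg at hmix
    have haf : IsAntiForcingSet G M S₀ := by
      refine ⟨fun f hf => hf.1, ?_, pm_delete_of_pm hM (fun f hf hfS => hS₀M f hfS hf), ?_⟩
      · rw [Set.eq_empty_iff_forall_notMem]
        rintro f ⟨hf, hfM⟩
        exact hS₀M f hf hfM
      · intro M'' hM''2
        have hGM'' := pm_of_pm_delete hM''2
        have hM''S : ∀ f ∈ M'', f ∉ S₀ := by
          intro f hf
          have := hM''2.1 hf
          rw [SimpleGraph.edgeSet_deleteEdges] at this
          exact this.2
        have hS : ∀ f ∈ M'', Sym2.map Sum.inl f ∉ Se := by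
          intro f hf hfe
          exact hM''S f hf ⟨hGM''.1 hf, hfe⟩
        by_cases huvM'' : s(u, v) ∈ M''
        · exfalso
          have hQeq : (M'' \ {s(u, v)}) ∪ {s(u, v)} = M'' := by
            rw [Set.diff_union_self]
            exact Set.union_eq_self_of_subset_right (Set.singleton_subset_iff.2 huvM'')
          have hQ : IsPM G ((M'' \ {s(u, v)}) ∪ {s(u, v)}) := by rw [hQeq]; exact hGM''
          have hC := isPM_typeC huv hQ (fun h => h.2 rfl)
            (fun f hf => hS f hf.1) hmix.1 h12Se hmix.2
          have hEqMe := hSe.2.2.2 _ hC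
          have hu0 : s(Sum.inl u, Sum.inr 0) ∈ Me := by
            rw [← hEqMe]; exact Set.mem_union_right _ (by simp)
          rw [hMedef] at hu0
          simp only [Set.mem_union, Set.mem_image, Set.mem_insert_iff,
            Set.mem_singleton_iff] at hu0
          rcases hu0 with ⟨g, hg, hEq'⟩ | h | h
          · exact map_ne_of_inr_mem (i := 0) (by simp) hEq'
          · simp [Sym2.eq_iff] at h
          · simp [Sym2.eq_iff] at h
        · exact typeAunique M'' hGM'' huvM'' hS
    have hc1 : af G M ≤ S₀.ncard := af_le haf
    have hc3 : (Sym2.map (Sum.inl : V → V ⊕ Fin 4) '' S₀).ncard + 1 ≤ Se.ncard := by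
      have hsub : insert x (Sym2.map Sum.inl '' S₀) ⊆ Se := by
        rintro e (rfl | he)
        · exact hxSe
        · exact himg he
      have h2 : (insert x (Sym2.map (Sum.inl : V → V ⊕ Fin 4) '' S₀)).ncard =
          (Sym2.map (Sum.inl : V → V ⊕ Fin 4) '' S₀).ncard + 1 :=
        Set.ncard_insert_of_notMem hxnotimg (Set.toFinite _)
      have h3 := Set.ncard_le_ncard hsub (Set.toFinite _)
      omega
    rw [hSecard] at hc3
    omega

end AS

/-- Let `M` be a perfect matching of a connected graph `G` with `af(G,M) = Af(G)` and
let `e = uv` be an edge of `G` not in `M`. Then `M_e = M ∪ {w₁w₄, w₂w₃}` is a perfect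
matching of `G_e` and `Af(G_e) = af(G_e, M_e)`. -/
theorem statement_10 {V : Type*} [Fintype V] (G : SimpleGraph V) (M : Set (Sym2 V))
    (hconn : G.Connected) (hM : IsPM G M) (hmax : af G M = Af G)
    (u v : V) (huv : G.Adj u v) (heM : s(u, v) ∉ M) :
    IsPM (addSquare G u v)
        ((Sym2.map Sum.inl '' M) ∪ {s(Sum.inr 0, Sum.inr 3), s(Sum.inr 1, Sum.inr 2)}) ∧
      Af (addSquare G u v) =
        af (addSquare G u v)
          ((Sym2.map Sum.inl '' M) ∪ {s(Sum.inr 0, Sum.inr 3), s(Sum.inr 1, Sum.inr 2)}) := by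
  classical
  have hMePM : IsPM (addSquare G u v)
      ((Sym2.map Sum.inl '' M) ∪ {s(Sum.inr 0, Sum.inr 3), s(Sum.inr 1, Sum.inr 2)}) := by
    have := AS.isPM_typeA (S := (∅ : Set (Sym2 (V ⊕ Fin 4)))) hM heM
      (fun f _ => Set.notMem_empty _) (Set.notMem_empty _) (Set.notMem_empty _)
    rwa [SimpleGraph.deleteEdges_empty] at this
  have hup : ∀ M', IsPM G M' → af G M' ≤ af G M := by
    intro M' hM'
    rw [hmax]
    exact AS.af_le_Af hM'
  refine ⟨hMePM, ?_⟩
  apply le_antisymm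
  · refine csSup_le ?_ ?_
    · exact ⟨af (addSquare G u v)
        ((Sym2.map Sum.inl '' M) ∪ {s(Sum.inr 0, Sum.inr 3), s(Sum.inr 1, Sum.inr 2)}),
        _, hMePM, rfl⟩
    · rintro n ⟨N, hN, rfl⟩
      exact le_trans (AS.af_up huv hM hup hN) (AS.af_low huv hM heM)
  · exact le_csSup (AS.Af_bddAbove _) ⟨_, hMePM, rfl⟩
end
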